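/- arXiv:math/0511443 — 11 statements merged into one kernel-verified Lean document; each statement's English description precedes it below -/
import Mathlib

section
/- For all (u,v) ∈ ℝ², the vector Ĩ(u,v) ∈ ℝ⁶ has Euclidean norm 1 and satisfies r·Ĩ₁(u,v) + k·Ĩ₂(u,v) = 0, where Ĩ₁, Ĩ₂ are its first two coordinates. Consequently the bipolar surface τ̃_{r,k} lies in the intersection of the unit sphere S⁵ with a fixed 5-dimensional linear subspace of ℝ⁶, i.e., in a totally geodesic S⁴ ⊂ S⁵. -/
open Real

/-- The normalizing factor `D(v) = sqrt(r²cos²v + k²sin²v)`. -/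
noncomputable def lawsonD (r k : ℝ) (v : ℝ) : ℝ :=
  Real.sqrt (r ^ 2 * cos v ^ 2 + k ^ 2 * sin v ^ 2)
/-- The bipolar surface map `Ĩ : ℝ² → ℝ⁶` of the Lawson surface `τ_{r,k}`. -/
noncomputable def bipolarI (r k : ℝ) (u v : ℝ) : Fin 6 → ℝ := fun i =>
  ![-(k * sin v * cos v),
    r * sin v * cos v,
    -(r * cos v ^ 2 * sin (k * u) * cos (r * u)) - k * sin v ^ 2 * sin (r * u) * cos (k * u),
    r * cos v ^ 2 * sin (r * u) * cos (k * u) + k * sin v ^ 2 * sin (k * u) * cos (r * u),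
    -(r * cos v ^ 2 * sin (k * u) * sin (r * u)) + k * sin v ^ 2 * cos (r * u) * cos (k * u),
    r * cos v ^ 2 * cos (k * u) * cos (r * u) - k * sin v ^ 2 * sin (r * u) * sin (k * u)] i
    / lawsonD r k v
lemma vec6_five {α : Type*} (a b c d e f : α) : ![a,b,c,d,e,f] (5 : Fin 6) = f := rfl

/-- `Ĩ` has unit norm and its first two coordinates satisfy `r·Ĩ₁ + k·Ĩ₂ = 0`,
so the bipolar surface lies in a totally geodesic `S⁴ ⊂ S⁵`. -/
theorem stmt_1 (r k : ℤ) (hk : 0 < k) (hrk : k < r) (u v : ℝ) :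
    (∑ i : Fin 6, bipolarI r k u v i ^ 2 = 1) ∧
    (r : ℝ) * bipolarI r k u v 0 + (k : ℝ) * bipolarI r k u v 1 = 0 := by
  have hkr : (0:ℝ) < (k:ℝ) := by exact_mod_cast hk
  have hrr : (0:ℝ) < (r:ℝ) := by have : (0:ℤ) < r := hk.trans hrk; exact_mod_cast this
  have hpos : 0 < (r:ℝ)^2 * cos v ^2 + (k:ℝ)^2 * sin v ^2 := by
    have hlt : (k:ℝ) < (r:ℝ) := by exact_mod_cast hrk
    have hle : (k:ℝ)^2 ≤ (r:ℝ)^2 := by nlinarith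
    nlinarith [sin_sq_add_cos_sq v, sq_nonneg (cos v),
      mul_nonneg (sub_nonneg.mpr hle) (sq_nonneg (cos v)), mul_pos hkr hkr]
  have hD : 0 < lawsonD r k v := Real.sqrt_pos.mpr hpos
  have hD2 : lawsonD (r:ℝ) (k:ℝ) v ^ 2 = (r:ℝ)^2*cos v^2 + (k:ℝ)^2*sin v^2 := Real.sq_sqrt hpos.le
  have b0 : bipolarI (r:ℝ) (k:ℝ) u v 0 = -((k:ℝ) * sin v * cos v) / lawsonD r k v := rfl
  have b1 : bipolarI (r:ℝ) (k:ℝ) u v 1 = (r:ℝ) * sin v * cos v / lawsonD r k v := rfl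
  have b2 : bipolarI (r:ℝ) (k:ℝ) u v 2 = (-((r:ℝ) * cos v ^ 2 * sin ((k:ℝ) * u) * cos ((r:ℝ) * u)) - (k:ℝ) * sin v ^ 2 * sin ((r:ℝ) * u) * cos ((k:ℝ) * u)) / lawsonD r k v := rfl
  have b3 : bipolarI (r:ℝ) (k:ℝ) u v 3 = ((r:ℝ) * cos v ^ 2 * sin ((r:ℝ) * u) * cos ((k:ℝ) * u) + (k:ℝ) * sin v ^ 2 * sin ((k:ℝ) * u) * cos ((r:ℝ) * u)) / lawsonD r k v := rfl
  have b4 : bipolarI (r:ℝ) (k:ℝ) u v 4 = (-((r:ℝ) * cos v ^ 2 * sin ((k:ℝ) * u) * sin ((r:ℝ) * u)) + (k:ℝ) * sin v ^ 2 * cos ((r:ℝ) * u) * cos ((k:ℝ) * u)) / lawsonD r k v := rfl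
  have b5 : bipolarI (r:ℝ) (k:ℝ) u v 5 = ((r:ℝ) * cos v ^ 2 * cos ((k:ℝ) * u) * cos ((r:ℝ) * u) - (k:ℝ) * sin v ^ 2 * sin ((r:ℝ) * u) * sin ((k:ℝ) * u)) / lawsonD r k v := rfl
  constructor
  · rw [Fin.sum_univ_six, b0, b1, b2, b3, b4, b5]
    rw [div_pow, div_pow, div_pow, div_pow, div_pow, div_pow]
    rw [← add_div, ← add_div, ← add_div, ← add_div,
      ← add_div, div_eq_one_iff_eq (by positivity), hD2]
    linear_combination (((r:ℝ)^2*cos v^4 + (k:ℝ)^2*sin v^4) * (sin (r*u)^2 + cos (r*u)^2)) * sin_sq_add_cos_sq ((k:ℝ)*u) + ((r:ℝ)^2*cos v^4 + (k:ℝ)^2*sin v^4) * sin_sq_add_cos_sq ((r:ℝ)*u) + ((r:ℝ)^2*cos v^2 + (k:ℝ)^2*sin v^2) * sin_sq_add_cos_sq v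
  · rw [b0, b1]; ring
end

section
/- Set F(v) = r²cos²(v) + k²sin²(v). For all (u,v) ∈ ℝ² the partial derivatives of Ĩ satisfy: ⟨∂Ĩ/∂u, ∂Ĩ/∂v⟩ = 0, ‖∂Ĩ/∂u‖² = (F(v)² + r²k²)/F(v), and ‖∂Ĩ/∂v‖² = (F(v)² + r²k²)/F(v)². In other words, the metric induced on the bipolar surface τ̃_{r,k} is ((F² + r²k²)/F)(du² + dv²/F). -/
open Real

/-- `F(v) = r²cos²v + k²sin²v`. -/
noncomputable def lawsonF (r k : ℝ) (v : ℝ) : ℝ := r ^ 2 * cos v ^ 2 + k ^ 2 * sin v ^ 2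

set_option maxHeartbeats 4000000 in
/-- The induced metric on the bipolar surface is `((F² + r²k²)/F)(du² + dv²/F)`. -/
theorem stmt_2 (r k : ℤ) (hk : 0 < k) (hrk : k < r) (u v : ℝ) :
    (∑ i : Fin 6,
        deriv (fun u' => bipolarI r k u' v i) u * deriv (fun v' => bipolarI r k u v' i) v = 0) ∧
    (∑ i : Fin 6, (deriv (fun u' => bipolarI r k u' v i) u) ^ 2 =
      (lawsonF r k v ^ 2 + (r : ℝ) ^ 2 * (k : ℝ) ^ 2) / lawsonF r k v) ∧
    (∑ i : Fin 6, (deriv (fun v' => bipolarI r k u v' i) v) ^ 2 =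
      (lawsonF r k v ^ 2 + (r : ℝ) ^ 2 * (k : ℝ) ^ 2) / lawsonF r k v ^ 2) := by
  have hk1 : (1:ℝ) ≤ (k:ℝ) := by exact_mod_cast hk
  have hkr : (k:ℝ) ≤ (r:ℝ) := by exact_mod_cast hrk.le
  have hF : (0:ℝ) < (r:ℝ) ^ 2 * cos v ^ 2 + (k:ℝ) ^ 2 * sin v ^ 2 := by
    have h1 : (1:ℝ) ≤ (k:ℝ)^2 := by nlinarith
    have h2 : (0:ℝ) ≤ ((r:ℝ)^2 - (k:ℝ)^2) * cos v ^ 2 :=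
      mul_nonneg (by nlinarith) (sq_nonneg _)
    nlinarith [sin_sq_add_cos_sq v]
  have hDpos : 0 < lawsonD (r:ℝ) (k:ℝ) v := by rw [lawsonD]; exact Real.sqrt_pos.mpr hF
  have hDne : lawsonD (r:ℝ) (k:ℝ) v ≠ 0 := hDpos.ne'
  have ht2 : lawsonD (r:ℝ) (k:ℝ) v ^ 2 = (r:ℝ) ^ 2 * cos v ^ 2 + (k:ℝ) ^ 2 * sin v ^ 2 := by
    rw [lawsonD]; exact Real.sq_sqrt hF.le
  -- u-direction building blocks
  have hsk : HasDerivAt (fun t : ℝ => sin ((k:ℝ)*t)) ((k:ℝ) * cos ((k:ℝ)*u)) u := by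
    have h := ((hasDerivAt_id u).const_mul ((k:ℝ))).sin
    convert h using 1
    · rfl
    change _ = cos ((k:ℝ) * u) * ((k:ℝ) * 1); ring
  have hck : HasDerivAt (fun t : ℝ => cos ((k:ℝ)*t)) (-((k:ℝ) * sin ((k:ℝ)*u))) u := by
    have h := ((hasDerivAt_id u).const_mul ((k:ℝ))).cos
    convert h using 1
    · rfl
    change _ = -sin ((k:ℝ) * u) * ((k:ℝ) * 1); ring
  have hsr : HasDerivAt (fun t : ℝ => sin ((r:ℝ)*t)) ((r:ℝ) * cos ((r:ℝ)*u)) u := by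
    have h := ((hasDerivAt_id u).const_mul ((r:ℝ))).sin
    convert h using 1
    · rfl
    change _ = cos ((r:ℝ) * u) * ((r:ℝ) * 1); ring
  have hcr : HasDerivAt (fun t : ℝ => cos ((r:ℝ)*t)) (-((r:ℝ) * sin ((r:ℝ)*u))) u := by
    have h := ((hasDerivAt_id u).const_mul ((r:ℝ))).cos
    convert h using 1
    · rfl
    change _ = -sin ((r:ℝ) * u) * ((r:ℝ) * 1); ring
  -- v-direction building blocks
  have hsv := Real.hasDerivAt_sin v
  have hcv := Real.hasDerivAt_cos v
  have hFv : HasDerivAt (fun v' : ℝ => (r:ℝ) ^ 2 * cos v' ^ 2 + (k:ℝ) ^ 2 * sin v' ^ 2)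
      (2*((k:ℝ)^2-(r:ℝ)^2)*sin v*cos v) v := by
    have h := ((hcv.pow 2).const_mul ((r:ℝ)^2)).add ((hsv.pow 2).const_mul ((k:ℝ)^2))
    exact h.congr_deriv (by norm_num; ring)
  have hDt : HasDerivAt (fun v' : ℝ => lawsonD (r:ℝ) (k:ℝ) v')
      ((((k:ℝ)^2-(r:ℝ)^2)*sin v*cos v) / lawsonD (r:ℝ) (k:ℝ) v) v := by
    have h := hFv.sqrt hF.ne'
    convert h using 1
    · rfl
    rw [show lawsonD (r:ℝ) (k:ℝ) v = Real.sqrt ((r:ℝ) ^ 2 * cos v ^ 2 + (k:ℝ) ^ 2 * sin v ^ 2) from rfl]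
    ring
  -- the twelve derivatives
  have d0u : deriv (fun u' => bipolarI (r:ℝ) (k:ℝ) u' v 0) u = 0 := by
    rw [show (fun u' : ℝ => bipolarI (r:ℝ) (k:ℝ) u' v 0)
      = fun _ => -((k:ℝ) * sin v * cos v) / lawsonD (r:ℝ) (k:ℝ) v from rfl]
    exact deriv_const _ _
  have d1u : deriv (fun u' => bipolarI (r:ℝ) (k:ℝ) u' v 1) u = 0 := by
    rw [show (fun u' : ℝ => bipolarI (r:ℝ) (k:ℝ) u' v 1)
      = fun _ => (r:ℝ) * sin v * cos v / lawsonD (r:ℝ) (k:ℝ) v from rfl]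
    exact deriv_const _ _
  have d2u : deriv (fun u' => bipolarI (r:ℝ) (k:ℝ) u' v 2) u =
      ((r:ℝ)^2*cos v^2*sin ((k:ℝ)*u)*sin ((r:ℝ)*u) + (k:ℝ)^2*sin v^2*sin ((k:ℝ)*u)*sin ((r:ℝ)*u)
        - (r:ℝ)*(k:ℝ)*cos v^2*cos ((k:ℝ)*u)*cos ((r:ℝ)*u) - (r:ℝ)*(k:ℝ)*sin v^2*cos ((k:ℝ)*u)*cos ((r:ℝ)*u))
        / lawsonD (r:ℝ) (k:ℝ) v := by
    exact (((((hsk.const_mul ((r:ℝ) * cos v ^ 2)).mul hcr).neg).sub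
        ((hsr.const_mul ((k:ℝ) * sin v ^ 2)).mul hck)).div_const (lawsonD (r:ℝ) (k:ℝ) v)).deriv.trans (by first | (field_simp; ring) | field_simp | ring)
  have d3u : deriv (fun u' => bipolarI (r:ℝ) (k:ℝ) u' v 3) u =
      ((r:ℝ)^2*cos v^2*cos ((r:ℝ)*u)*cos ((k:ℝ)*u) + (k:ℝ)^2*sin v^2*cos ((r:ℝ)*u)*cos ((k:ℝ)*u)
        - (r:ℝ)*(k:ℝ)*cos v^2*sin ((r:ℝ)*u)*sin ((k:ℝ)*u) - (r:ℝ)*(k:ℝ)*sin v^2*sin ((r:ℝ)*u)*sin ((k:ℝ)*u))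
        / lawsonD (r:ℝ) (k:ℝ) v := by
    exact ((((hsr.const_mul ((r:ℝ) * cos v ^ 2)).mul hck).add
        ((hsk.const_mul ((k:ℝ) * sin v ^ 2)).mul hcr)).div_const (lawsonD (r:ℝ) (k:ℝ) v)).deriv.trans (by first | (field_simp; ring) | field_simp | ring)
  have d4u : deriv (fun u' => bipolarI (r:ℝ) (k:ℝ) u' v 4) u =
      (-((r:ℝ)*(k:ℝ)*cos v^2*cos ((k:ℝ)*u)*sin ((r:ℝ)*u)) - (r:ℝ)^2*cos v^2*sin ((k:ℝ)*u)*cos ((r:ℝ)*u)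
        - (r:ℝ)*(k:ℝ)*sin v^2*sin ((r:ℝ)*u)*cos ((k:ℝ)*u) - (k:ℝ)^2*sin v^2*cos ((r:ℝ)*u)*sin ((k:ℝ)*u))
        / lawsonD (r:ℝ) (k:ℝ) v := by
    exact (((((hsk.const_mul ((r:ℝ) * cos v ^ 2)).mul hsr).neg).add
        ((hcr.const_mul ((k:ℝ) * sin v ^ 2)).mul hck)).div_const (lawsonD (r:ℝ) (k:ℝ) v)).deriv.trans (by first | (field_simp; ring) | field_simp | ring)
  have d5u : deriv (fun u' => bipolarI (r:ℝ) (k:ℝ) u' v 5) u =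
      (-((r:ℝ)*(k:ℝ)*cos v^2*sin ((k:ℝ)*u)*cos ((r:ℝ)*u)) - (r:ℝ)^2*cos v^2*cos ((k:ℝ)*u)*sin ((r:ℝ)*u)
        - (r:ℝ)*(k:ℝ)*sin v^2*cos ((r:ℝ)*u)*sin ((k:ℝ)*u) - (k:ℝ)^2*sin v^2*sin ((r:ℝ)*u)*cos ((k:ℝ)*u))
        / lawsonD (r:ℝ) (k:ℝ) v := by
    exact ((((hck.const_mul ((r:ℝ) * cos v ^ 2)).mul hcr).sub
        ((hsr.const_mul ((k:ℝ) * sin v ^ 2)).mul hsk)).div_const (lawsonD (r:ℝ) (k:ℝ) v)).deriv.trans (by first | (field_simp; ring) | field_simp | ring)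
  have d0v : deriv (fun v' => bipolarI (r:ℝ) (k:ℝ) u v' 0) v =
      (((k:ℝ)*(sin v^2 - cos v^2)) * lawsonD (r:ℝ) (k:ℝ) v ^ 2
        - (-((k:ℝ)*sin v*cos v)) * (((k:ℝ)^2-(r:ℝ)^2)*sin v*cos v)) / lawsonD (r:ℝ) (k:ℝ) v ^ 3 := by
    exact ((((hsv.const_mul (k:ℝ)).mul hcv).neg.div hDt hDne).deriv.trans (by simp only [Pi.mul_apply, Pi.neg_apply, Pi.add_apply, Pi.sub_apply, Pi.pow_apply]; first | (field_simp; ring) | field_simp | ring))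
  have d1v : deriv (fun v' => bipolarI (r:ℝ) (k:ℝ) u v' 1) v =
      (((r:ℝ)*(cos v^2 - sin v^2)) * lawsonD (r:ℝ) (k:ℝ) v ^ 2
        - ((r:ℝ)*sin v*cos v) * (((k:ℝ)^2-(r:ℝ)^2)*sin v*cos v)) / lawsonD (r:ℝ) (k:ℝ) v ^ 3 := by
    exact ((((hsv.const_mul (r:ℝ)).mul hcv).div hDt hDne).deriv.trans (by simp only [Pi.mul_apply, Pi.neg_apply, Pi.add_apply, Pi.sub_apply, Pi.pow_apply]; first | (field_simp; ring) | field_simp | ring))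
  have d2v : deriv (fun v' => bipolarI (r:ℝ) (k:ℝ) u v' 2) v =
      ((2*sin v*cos v*((r:ℝ)*sin ((k:ℝ)*u)*cos ((r:ℝ)*u) - (k:ℝ)*sin ((r:ℝ)*u)*cos ((k:ℝ)*u))) * lawsonD (r:ℝ) (k:ℝ) v ^ 2
        - (-((r:ℝ) * cos v ^ 2 * sin ((k:ℝ) * u) * cos ((r:ℝ) * u)) - (k:ℝ) * sin v ^ 2 * sin ((r:ℝ) * u) * cos ((k:ℝ) * u))
          * (((k:ℝ)^2-(r:ℝ)^2)*sin v*cos v)) / lawsonD (r:ℝ) (k:ℝ) v ^ 3 := by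
    exact ((((((hcv.pow 2).const_mul (r:ℝ)).mul_const (sin ((k:ℝ)*u))).mul_const (cos ((r:ℝ)*u))).neg.sub
        ((((hsv.pow 2).const_mul (k:ℝ)).mul_const (sin ((r:ℝ)*u))).mul_const (cos ((k:ℝ)*u)))).div hDt hDne).deriv.trans (by simp only [Pi.mul_apply, Pi.neg_apply, Pi.add_apply, Pi.sub_apply, Pi.pow_apply]; first | (field_simp; ring) | field_simp | ring)
  have d3v : deriv (fun v' => bipolarI (r:ℝ) (k:ℝ) u v' 3) v =
      ((2*sin v*cos v*((k:ℝ)*sin ((k:ℝ)*u)*cos ((r:ℝ)*u) - (r:ℝ)*sin ((r:ℝ)*u)*cos ((k:ℝ)*u))) * lawsonD (r:ℝ) (k:ℝ) v ^ 2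
        - ((r:ℝ) * cos v ^ 2 * sin ((r:ℝ) * u) * cos ((k:ℝ) * u) + (k:ℝ) * sin v ^ 2 * sin ((k:ℝ) * u) * cos ((r:ℝ) * u))
          * (((k:ℝ)^2-(r:ℝ)^2)*sin v*cos v)) / lawsonD (r:ℝ) (k:ℝ) v ^ 3 := by
    exact ((((((hcv.pow 2).const_mul (r:ℝ)).mul_const (sin ((r:ℝ)*u))).mul_const (cos ((k:ℝ)*u))).add
        ((((hsv.pow 2).const_mul (k:ℝ)).mul_const (sin ((k:ℝ)*u))).mul_const (cos ((r:ℝ)*u)))).div hDt hDne).deriv.trans (by simp only [Pi.mul_apply, Pi.neg_apply, Pi.add_apply, Pi.sub_apply, Pi.pow_apply]; first | (field_simp; ring) | field_simp | ring)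
  have d4v : deriv (fun v' => bipolarI (r:ℝ) (k:ℝ) u v' 4) v =
      ((2*sin v*cos v*((r:ℝ)*sin ((k:ℝ)*u)*sin ((r:ℝ)*u) + (k:ℝ)*cos ((r:ℝ)*u)*cos ((k:ℝ)*u))) * lawsonD (r:ℝ) (k:ℝ) v ^ 2
        - (-((r:ℝ) * cos v ^ 2 * sin ((k:ℝ) * u) * sin ((r:ℝ) * u)) + (k:ℝ) * sin v ^ 2 * cos ((r:ℝ) * u) * cos ((k:ℝ) * u))
          * (((k:ℝ)^2-(r:ℝ)^2)*sin v*cos v)) / lawsonD (r:ℝ) (k:ℝ) v ^ 3 := by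
    exact ((((((hcv.pow 2).const_mul (r:ℝ)).mul_const (sin ((k:ℝ)*u))).mul_const (sin ((r:ℝ)*u))).neg.add
        ((((hsv.pow 2).const_mul (k:ℝ)).mul_const (cos ((r:ℝ)*u))).mul_const (cos ((k:ℝ)*u)))).div hDt hDne).deriv.trans (by simp only [Pi.mul_apply, Pi.neg_apply, Pi.add_apply, Pi.sub_apply, Pi.pow_apply]; first | (field_simp; ring) | field_simp | ring)
  have d5v : deriv (fun v' => bipolarI (r:ℝ) (k:ℝ) u v' 5) v =
      ((-(2*sin v*cos v*((r:ℝ)*cos ((k:ℝ)*u)*cos ((r:ℝ)*u) + (k:ℝ)*sin ((r:ℝ)*u)*sin ((k:ℝ)*u)))) * lawsonD (r:ℝ) (k:ℝ) v ^ 2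
        - ((r:ℝ) * cos v ^ 2 * cos ((k:ℝ) * u) * cos ((r:ℝ) * u) - (k:ℝ) * sin v ^ 2 * sin ((r:ℝ) * u) * sin ((k:ℝ) * u))
          * (((k:ℝ)^2-(r:ℝ)^2)*sin v*cos v)) / lawsonD (r:ℝ) (k:ℝ) v ^ 3 := by
    exact ((((((hcv.pow 2).const_mul (r:ℝ)).mul_const (cos ((k:ℝ)*u))).mul_const (cos ((r:ℝ)*u))).sub
        ((((hsv.pow 2).const_mul (k:ℝ)).mul_const (sin ((r:ℝ)*u))).mul_const (sin ((k:ℝ)*u)))).div hDt hDne).deriv.trans (by simp only [Pi.mul_apply, Pi.neg_apply, Pi.add_apply, Pi.sub_apply, Pi.pow_apply]; first | (field_simp; ring) | field_simp | ring)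
  refine ⟨?_, ?_, ?_⟩
  · simp only [Fin.sum_univ_six]
    rw [d0u, d1u, d2u, d3u, d4u, d5u, d0v, d1v, d2v, d3v, d4v, d5v]
    field_simp
    ring
  · simp only [Fin.sum_univ_six]
    rw [d2u, d3u, d4u, d5u, d0u, d1u, lawsonF]
    field_simp
    rw [ht2]
    linear_combination (-1*(k:ℝ)^6*sin v^4 + (k:ℝ)^6*sin v^4*cos ((k:ℝ)*u)^2*cos ((r:ℝ)*u)^2 + (k:ℝ)^6*sin v^4*cos ((k:ℝ)*u)^2*sin ((r:ℝ)*u)^2 + (k:ℝ)^6*sin v^4*sin ((k:ℝ)*u)^2*cos ((r:ℝ)*u)^2 + (k:ℝ)^6*sin v^4*sin ((k:ℝ)*u)^2*sin ((r:ℝ)*u)^2 + (r:ℝ)^2*(k:ℝ)^4*sin v^2 + (r:ℝ)^2*(k:ℝ)^4*sin v^4*cos ((k:ℝ)*u)^2*cos ((r:ℝ)*u)^2 + (r:ℝ)^2*(k:ℝ)^4*sin v^4*cos ((k:ℝ)*u)^2*sin ((r:ℝ)*u)^2 + (r:ℝ)^2*(k:ℝ)^4*sin v^4*sin ((k:ℝ)*u)^2*cos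 ((r:ℝ)*u)^2 + (r:ℝ)^2*(k:ℝ)^4*sin v^4*sin ((k:ℝ)*u)^2*sin ((r:ℝ)*u)^2 + -4*(r:ℝ)^2*(k:ℝ)^4*cos v^2*sin v^2 + 5*(r:ℝ)^2*(k:ℝ)^4*cos v^2*sin v^2*cos ((k:ℝ)*u)^2*cos ((r:ℝ)*u)^2 + 5*(r:ℝ)^2*(k:ℝ)^4*cos v^2*sin v^2*cos ((k:ℝ)*u)^2*sin ((r:ℝ)*u)^2 + 5*(r:ℝ)^2*(k:ℝ)^4*cos v^2*sin v^2*sin ((k:ℝ)*u)^2*cos ((r:ℝ)*u)^2 + 5*(r:ℝ)^2*(k:ℝ)^4*cos v^2*sin v^2*sin ((k:ℝ)*u)^2*sin ((r:ℝ)*u)^2 + -1*(r:ℝ)^2*(k:ℝ)^4*cos v^4 + (r:ℝ)^2*(k:ℝ)^4*cos v^4*cos ((k:ℝ)*u)^2*cos ((r:ℝ)*u)^2 + (r:ℝ)^2*(k:ℝ)^4*cos v^4*cos ((k:ℝ)*u)^2*sin ((r:ℝ)*u)^2 + (r:ℝ)^2*(k:ℝ)^4*cos v^4*sin ((k:ℝ)*u)^2*cos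 ((r:ℝ)*u)^2 + (r:ℝ)^2*(k:ℝ)^4*cos v^4*sin ((k:ℝ)*u)^2*sin ((r:ℝ)*u)^2 + (r:ℝ)^4*(k:ℝ)^2*cos v^2 + (r:ℝ)^4*(k:ℝ)^2*cos v^2*sin v^2*cos ((k:ℝ)*u)^2*cos ((r:ℝ)*u)^2 + (r:ℝ)^4*(k:ℝ)^2*cos v^2*sin v^2*cos ((k:ℝ)*u)^2*sin ((r:ℝ)*u)^2 + (r:ℝ)^4*(k:ℝ)^2*cos v^2*sin v^2*sin ((k:ℝ)*u)^2*cos ((r:ℝ)*u)^2 + (r:ℝ)^4*(k:ℝ)^2*cos v^2*sin v^2*sin ((k:ℝ)*u)^2*sin ((r:ℝ)*u)^2 + -4*(r:ℝ)^4*(k:ℝ)^2*cos v^4 + 5*(r:ℝ)^4*(k:ℝ)^2*cos v^4*cos ((k:ℝ)*u)^2*cos ((r:ℝ)*u)^2 + 5*(r:ℝ)^4*(k:ℝ)^2*cos v^4*cos ((k:ℝ)*u)^2*sin ((r:ℝ)*u)^2 + 5*(r:ℝ)^4*(k:ℝ)^2*cos v^4*sin ((k:ℝ)*u)^2*cos ((r:ℝ)*u)^2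 + 5*(r:ℝ)^4*(k:ℝ)^2*cos v^4*sin ((k:ℝ)*u)^2*sin ((r:ℝ)*u)^2) * sin_sq_add_cos_sq v + ((k:ℝ)^6*sin v^4*cos ((r:ℝ)*u)^2 + (k:ℝ)^6*sin v^4*sin ((r:ℝ)*u)^2 + -1*(k:ℝ)^6*cos v^2*sin v^4*cos ((r:ℝ)*u)^2 + -1*(k:ℝ)^6*cos v^2*sin v^4*sin ((r:ℝ)*u)^2 + (r:ℝ)^2*(k:ℝ)^4*sin v^4*cos ((r:ℝ)*u)^2 + (r:ℝ)^2*(k:ℝ)^4*sin v^4*sin ((r:ℝ)*u)^2 + 5*(r:ℝ)^2*(k:ℝ)^4*cos v^2*sin v^2*cos ((r:ℝ)*u)^2 + 5*(r:ℝ)^2*(k:ℝ)^4*cos v^2*sin v^2*sin ((r:ℝ)*u)^2 + -1*(r:ℝ)^2*(k:ℝ)^4*cos v^2*sin v^4*cos ((r:ℝ)*u)^2 + -1*(r:ℝ)^2*(k:ℝ)^4*cos v^2*sin v^4*sin ((r:ℝ)*u)^2 + (r:ℝ)^2*(k:ℝ)^4*cos v^4*cos ((r:ℝ)*u)^2 +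 (r:ℝ)^2*(k:ℝ)^4*cos v^4*sin ((r:ℝ)*u)^2 + -5*(r:ℝ)^2*(k:ℝ)^4*cos v^4*sin v^2*cos ((r:ℝ)*u)^2 + -5*(r:ℝ)^2*(k:ℝ)^4*cos v^4*sin v^2*sin ((r:ℝ)*u)^2 + -1*(r:ℝ)^2*(k:ℝ)^4*cos v^6*cos ((r:ℝ)*u)^2 + -1*(r:ℝ)^2*(k:ℝ)^4*cos v^6*sin ((r:ℝ)*u)^2 + (r:ℝ)^4*(k:ℝ)^2*cos v^2*sin v^2*cos ((r:ℝ)*u)^2 + (r:ℝ)^4*(k:ℝ)^2*cos v^2*sin v^2*sin ((r:ℝ)*u)^2 + 5*(r:ℝ)^4*(k:ℝ)^2*cos v^4*cos ((r:ℝ)*u)^2 + 5*(r:ℝ)^4*(k:ℝ)^2*cos v^4*sin ((r:ℝ)*u)^2 + -1*(r:ℝ)^4*(k:ℝ)^2*cos v^4*sin v^2*cos ((r:ℝ)*u)^2 + -1*(r:ℝ)^4*(k:ℝ)^2*cos v^4*sin v^2*sin ((r:ℝ)*u)^2 + -4*(r:ℝ)^4*(k:ℝ)^2*cos v^6*cos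 ((r:ℝ)*u)^2 + -4*(r:ℝ)^4*(k:ℝ)^2*cos v^6*sin ((r:ℝ)*u)^2 + (r:ℝ)^6*cos v^6*cos ((r:ℝ)*u)^2 + (r:ℝ)^6*cos v^6*sin ((r:ℝ)*u)^2) * sin_sq_add_cos_sq ((k:ℝ)*u) + ((k:ℝ)^6*sin v^4 + -1*(k:ℝ)^6*cos v^2*sin v^4 + (r:ℝ)^2*(k:ℝ)^4*sin v^4 + 5*(r:ℝ)^2*(k:ℝ)^4*cos v^2*sin v^2 + -1*(r:ℝ)^2*(k:ℝ)^4*cos v^2*sin v^4 + (r:ℝ)^2*(k:ℝ)^4*cos v^4 + -5*(r:ℝ)^2*(k:ℝ)^4*cos v^4*sin v^2 + -1*(r:ℝ)^2*(k:ℝ)^4*cos v^6 + (r:ℝ)^4*(k:ℝ)^2*cos v^2*sin v^2 + 5*(r:ℝ)^4*(k:ℝ)^2*cos v^4 + -1*(r:ℝ)^4*(k:ℝ)^2*cos v^4*sin v^2 + -4*(r:ℝ)^4*(k:ℝ)^2*cos v^6 + (r:ℝ)^6*cos v^6) * sin_sq_add_cos_sq ((r:ℝ)*u)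
  · simp only [Fin.sum_univ_six]
    rw [d0v, d1v, d2v, d3v, d4v, d5v, lawsonF]
    field_simp
    rw [eq_div_iff (pow_pos (by linarith [hF]) 2).ne', show lawsonD (r:ℝ) (k:ℝ) v ^ 6 = (lawsonD (r:ℝ) (k:ℝ) v ^ 2)^3 by ring, ht2]
    linear_combination ((k:ℝ)^10*sin v^10 + -1*(k:ℝ)^10*cos v^2*sin v^8 + (k:ℝ)^10*cos v^2*sin v^8*cos ((k:ℝ)*u)^2*cos ((r:ℝ)*u)^2 + (k:ℝ)^10*cos v^2*sin v^8*cos ((k:ℝ)*u)^2*sin ((r:ℝ)*u)^2 + (k:ℝ)^10*cos v^2*sin v^8*sin ((k:ℝ)*u)^2*cos ((r:ℝ)*u)^2 + (k:ℝ)^10*cos v^2*sin v^8*sin ((k:ℝ)*u)^2*sin ((r:ℝ)*u)^2 + (r:ℝ)^2*(k:ℝ)^8*sin v^6 + (r:ℝ)^2*(k:ℝ)^8*sin v^8 + (r:ℝ)^2*(k:ℝ)^8*sin v^10 + (r:ℝ)^2*(k:ℝ)^8*cos v^2*sin v^6 + (r:ℝ)^2*(k:ℝ)^8*cos v^2*sin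 v^8 + 6*(r:ℝ)^2*(k:ℝ)^8*cos v^2*sin v^8*cos ((k:ℝ)*u)^2*cos ((r:ℝ)*u)^2 + 6*(r:ℝ)^2*(k:ℝ)^8*cos v^2*sin v^8*cos ((k:ℝ)*u)^2*sin ((r:ℝ)*u)^2 + 6*(r:ℝ)^2*(k:ℝ)^8*cos v^2*sin v^8*sin ((k:ℝ)*u)^2*cos ((r:ℝ)*u)^2 + 6*(r:ℝ)^2*(k:ℝ)^8*cos v^2*sin v^8*sin ((k:ℝ)*u)^2*sin ((r:ℝ)*u)^2 + -9*(r:ℝ)^2*(k:ℝ)^8*cos v^4*sin v^6 + 10*(r:ℝ)^2*(k:ℝ)^8*cos v^4*sin v^6*cos ((k:ℝ)*u)^2*cos ((r:ℝ)*u)^2 + 10*(r:ℝ)^2*(k:ℝ)^8*cos v^4*sin v^6*cos ((k:ℝ)*u)^2*sin ((r:ℝ)*u)^2 + 10*(r:ℝ)^2*(k:ℝ)^8*cos v^4*sin v^6*sin ((k:ℝ)*u)^2*cos ((r:ℝ)*u)^2 + 10*(r:ℝ)^2*(k:ℝ)^8*cos v^4*sin v^6*sin ((k:ℝ)*u)^2*sin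 ((r:ℝ)*u)^2 + -1*(r:ℝ)^2*(k:ℝ)^8*cos v^6*sin v^4 + (r:ℝ)^2*(k:ℝ)^8*cos v^6*sin v^4*cos ((k:ℝ)*u)^2*cos ((r:ℝ)*u)^2 + (r:ℝ)^2*(k:ℝ)^8*cos v^6*sin v^4*cos ((k:ℝ)*u)^2*sin ((r:ℝ)*u)^2 + (r:ℝ)^2*(k:ℝ)^8*cos v^6*sin v^4*sin ((k:ℝ)*u)^2*cos ((r:ℝ)*u)^2 + (r:ℝ)^2*(k:ℝ)^8*cos v^6*sin v^4*sin ((k:ℝ)*u)^2*sin ((r:ℝ)*u)^2 + 3*(r:ℝ)^4*(k:ℝ)^6*cos v^2*sin v^4 + 3*(r:ℝ)^4*(k:ℝ)^6*cos v^2*sin v^6 + 2*(r:ℝ)^4*(k:ℝ)^6*cos v^2*sin v^8 + (r:ℝ)^4*(k:ℝ)^6*cos v^2*sin v^8*cos ((k:ℝ)*u)^2*cos ((r:ℝ)*u)^2 + (r:ℝ)^4*(k:ℝ)^6*cos v^2*sin v^8*cos ((k:ℝ)*u)^2*sin ((r:ℝ)*u)^2 + (r:ℝ)^4*(k:ℝ)^6*cos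 v^2*sin v^8*sin ((k:ℝ)*u)^2*cos ((r:ℝ)*u)^2 + (r:ℝ)^4*(k:ℝ)^6*cos v^2*sin v^8*sin ((k:ℝ)*u)^2*sin ((r:ℝ)*u)^2 + 3*(r:ℝ)^4*(k:ℝ)^6*cos v^4*sin v^4 + -4*(r:ℝ)^4*(k:ℝ)^6*cos v^4*sin v^6 + 20*(r:ℝ)^4*(k:ℝ)^6*cos v^4*sin v^6*cos ((k:ℝ)*u)^2*cos ((r:ℝ)*u)^2 + 20*(r:ℝ)^4*(k:ℝ)^6*cos v^4*sin v^6*cos ((k:ℝ)*u)^2*sin ((r:ℝ)*u)^2 + 20*(r:ℝ)^4*(k:ℝ)^6*cos v^4*sin v^6*sin ((k:ℝ)*u)^2*cos ((r:ℝ)*u)^2 + 20*(r:ℝ)^4*(k:ℝ)^6*cos v^4*sin v^6*sin ((k:ℝ)*u)^2*sin ((r:ℝ)*u)^2 + -20*(r:ℝ)^4*(k:ℝ)^6*cos v^6*sin v^4 + 23*(r:ℝ)^4*(k:ℝ)^6*cos v^6*sin v^4*cos ((k:ℝ)*u)^2*cos ((r:ℝ)*u)^2 + 23*(r:ℝ)^4*(k:ℝ)^6*cos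 v^6*sin v^4*cos ((k:ℝ)*u)^2*sin ((r:ℝ)*u)^2 + 23*(r:ℝ)^4*(k:ℝ)^6*cos v^6*sin v^4*sin ((k:ℝ)*u)^2*cos ((r:ℝ)*u)^2 + 23*(r:ℝ)^4*(k:ℝ)^6*cos v^6*sin v^4*sin ((k:ℝ)*u)^2*sin ((r:ℝ)*u)^2 + -2*(r:ℝ)^4*(k:ℝ)^6*cos v^8*sin v^2 + 2*(r:ℝ)^4*(k:ℝ)^6*cos v^8*sin v^2*cos ((k:ℝ)*u)^2*cos ((r:ℝ)*u)^2 + 2*(r:ℝ)^4*(k:ℝ)^6*cos v^8*sin v^2*cos ((k:ℝ)*u)^2*sin ((r:ℝ)*u)^2 + 2*(r:ℝ)^4*(k:ℝ)^6*cos v^8*sin v^2*sin ((k:ℝ)*u)^2*cos ((r:ℝ)*u)^2 + 2*(r:ℝ)^4*(k:ℝ)^6*cos v^8*sin v^2*sin ((k:ℝ)*u)^2*sin ((r:ℝ)*u)^2 + 3*(r:ℝ)^6*(k:ℝ)^4*cos v^4*sin v^2 + 3*(r:ℝ)^6*(k:ℝ)^4*cos v^4*sin v^4 + (r:ℝ)^6*(k:ℝ)^4*cos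 v^4*sin v^6 + 2*(r:ℝ)^6*(k:ℝ)^4*cos v^4*sin v^6*cos ((k:ℝ)*u)^2*cos ((r:ℝ)*u)^2 + 2*(r:ℝ)^6*(k:ℝ)^4*cos v^4*sin v^6*cos ((k:ℝ)*u)^2*sin ((r:ℝ)*u)^2 + 2*(r:ℝ)^6*(k:ℝ)^4*cos v^4*sin v^6*sin ((k:ℝ)*u)^2*cos ((r:ℝ)*u)^2 + 2*(r:ℝ)^6*(k:ℝ)^4*cos v^4*sin v^6*sin ((k:ℝ)*u)^2*sin ((r:ℝ)*u)^2 + 3*(r:ℝ)^6*(k:ℝ)^4*cos v^6*sin v^2 + -7*(r:ℝ)^6*(k:ℝ)^4*cos v^6*sin v^4 + 23*(r:ℝ)^6*(k:ℝ)^4*cos v^6*sin v^4*cos ((k:ℝ)*u)^2*cos ((r:ℝ)*u)^2 + 23*(r:ℝ)^6*(k:ℝ)^4*cos v^6*sin v^4*cos ((k:ℝ)*u)^2*sin ((r:ℝ)*u)^2 + 23*(r:ℝ)^6*(k:ℝ)^4*cos v^6*sin v^4*sin ((k:ℝ)*u)^2*cos ((r:ℝ)*u)^2 + 23*(r:ℝ)^6*(k:ℝ)^4*cos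 v^6*sin v^4*sin ((k:ℝ)*u)^2*sin ((r:ℝ)*u)^2 + -17*(r:ℝ)^6*(k:ℝ)^4*cos v^8*sin v^2 + 20*(r:ℝ)^6*(k:ℝ)^4*cos v^8*sin v^2*cos ((k:ℝ)*u)^2*cos ((r:ℝ)*u)^2 + 20*(r:ℝ)^6*(k:ℝ)^4*cos v^8*sin v^2*cos ((k:ℝ)*u)^2*sin ((r:ℝ)*u)^2 + 20*(r:ℝ)^6*(k:ℝ)^4*cos v^8*sin v^2*sin ((k:ℝ)*u)^2*cos ((r:ℝ)*u)^2 + 20*(r:ℝ)^6*(k:ℝ)^4*cos v^8*sin v^2*sin ((k:ℝ)*u)^2*sin ((r:ℝ)*u)^2 + -1*(r:ℝ)^6*(k:ℝ)^4*cos v^10 + (r:ℝ)^6*(k:ℝ)^4*cos v^10*cos ((k:ℝ)*u)^2*cos ((r:ℝ)*u)^2 + (r:ℝ)^6*(k:ℝ)^4*cos v^10*cos ((k:ℝ)*u)^2*sin ((r:ℝ)*u)^2 + (r:ℝ)^6*(k:ℝ)^4*cos v^10*sin ((k:ℝ)*u)^2*cos ((r:ℝ)*u)^2 + (r:ℝ)^6*(k:ℝ)^4*cos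 v^10*sin ((k:ℝ)*u)^2*sin ((r:ℝ)*u)^2 + (r:ℝ)^8*(k:ℝ)^2*cos v^6 + (r:ℝ)^8*(k:ℝ)^2*cos v^6*sin v^2 + (r:ℝ)^8*(k:ℝ)^2*cos v^6*sin v^4*cos ((k:ℝ)*u)^2*cos ((r:ℝ)*u)^2 + (r:ℝ)^8*(k:ℝ)^2*cos v^6*sin v^4*cos ((k:ℝ)*u)^2*sin ((r:ℝ)*u)^2 + (r:ℝ)^8*(k:ℝ)^2*cos v^6*sin v^4*sin ((k:ℝ)*u)^2*cos ((r:ℝ)*u)^2 + (r:ℝ)^8*(k:ℝ)^2*cos v^6*sin v^4*sin ((k:ℝ)*u)^2*sin ((r:ℝ)*u)^2 + (r:ℝ)^8*(k:ℝ)^2*cos v^8 + -3*(r:ℝ)^8*(k:ℝ)^2*cos v^8*sin v^2 + 10*(r:ℝ)^8*(k:ℝ)^2*cos v^8*sin v^2*cos ((k:ℝ)*u)^2*cos ((r:ℝ)*u)^2 + 10*(r:ℝ)^8*(k:ℝ)^2*cos v^8*sin v^2*cos ((k:ℝ)*u)^2*sin ((r:ℝ)*u)^2 + 10*(r:ℝ)^8*(k:ℝ)^2*cos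 v^8*sin v^2*sin ((k:ℝ)*u)^2*cos ((r:ℝ)*u)^2 + 10*(r:ℝ)^8*(k:ℝ)^2*cos v^8*sin v^2*sin ((k:ℝ)*u)^2*sin ((r:ℝ)*u)^2 + -5*(r:ℝ)^8*(k:ℝ)^2*cos v^10 + 6*(r:ℝ)^8*(k:ℝ)^2*cos v^10*cos ((k:ℝ)*u)^2*cos ((r:ℝ)*u)^2 + 6*(r:ℝ)^8*(k:ℝ)^2*cos v^10*cos ((k:ℝ)*u)^2*sin ((r:ℝ)*u)^2 + 6*(r:ℝ)^8*(k:ℝ)^2*cos v^10*sin ((k:ℝ)*u)^2*cos ((r:ℝ)*u)^2 + 6*(r:ℝ)^8*(k:ℝ)^2*cos v^10*sin ((k:ℝ)*u)^2*sin ((r:ℝ)*u)^2 + (r:ℝ)^10*cos v^10*cos ((k:ℝ)*u)^2*cos ((r:ℝ)*u)^2 + (r:ℝ)^10*cos v^10*cos ((k:ℝ)*u)^2*sin ((r:ℝ)*u)^2 + (r:ℝ)^10*cos v^10*sin ((k:ℝ)*u)^2*cos ((r:ℝ)*u)^2 + (r:ℝ)^10*cos v^10*sin ((k:ℝ)*u)^2*sin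 ((r:ℝ)*u)^2) * sin_sq_add_cos_sq v + ((k:ℝ)^10*cos v^2*sin v^8*cos ((r:ℝ)*u)^2 + (k:ℝ)^10*cos v^2*sin v^8*sin ((r:ℝ)*u)^2 + -1*(k:ℝ)^10*cos v^4*sin v^8*cos ((r:ℝ)*u)^2 + -1*(k:ℝ)^10*cos v^4*sin v^8*sin ((r:ℝ)*u)^2 + 6*(r:ℝ)^2*(k:ℝ)^8*cos v^2*sin v^8*cos ((r:ℝ)*u)^2 + 6*(r:ℝ)^2*(k:ℝ)^8*cos v^2*sin v^8*sin ((r:ℝ)*u)^2 + 10*(r:ℝ)^2*(k:ℝ)^8*cos v^4*sin v^6*cos ((r:ℝ)*u)^2 + 10*(r:ℝ)^2*(k:ℝ)^8*cos v^4*sin v^6*sin ((r:ℝ)*u)^2 + -6*(r:ℝ)^2*(k:ℝ)^8*cos v^4*sin v^8*cos ((r:ℝ)*u)^2 + -6*(r:ℝ)^2*(k:ℝ)^8*cos v^4*sin v^8*sin ((r:ℝ)*u)^2 + (r:ℝ)^2*(k:ℝ)^8*cos v^6*sin v^4*cos ((r:ℝ)*u)^2 + (r:ℝ)^2*(k:ℝ)^8*cos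 v^6*sin v^4*sin ((r:ℝ)*u)^2 + -10*(r:ℝ)^2*(k:ℝ)^8*cos v^6*sin v^6*cos ((r:ℝ)*u)^2 + -10*(r:ℝ)^2*(k:ℝ)^8*cos v^6*sin v^6*sin ((r:ℝ)*u)^2 + -1*(r:ℝ)^2*(k:ℝ)^8*cos v^8*sin v^4*cos ((r:ℝ)*u)^2 + -1*(r:ℝ)^2*(k:ℝ)^8*cos v^8*sin v^4*sin ((r:ℝ)*u)^2 + (r:ℝ)^4*(k:ℝ)^6*cos v^2*sin v^8*cos ((r:ℝ)*u)^2 + (r:ℝ)^4*(k:ℝ)^6*cos v^2*sin v^8*sin ((r:ℝ)*u)^2 + 20*(r:ℝ)^4*(k:ℝ)^6*cos v^4*sin v^6*cos ((r:ℝ)*u)^2 + 20*(r:ℝ)^4*(k:ℝ)^6*cos v^4*sin v^6*sin ((r:ℝ)*u)^2 + -1*(r:ℝ)^4*(k:ℝ)^6*cos v^4*sin v^8*cos ((r:ℝ)*u)^2 + -1*(r:ℝ)^4*(k:ℝ)^6*cos v^4*sin v^8*sin ((r:ℝ)*u)^2 + 23*(r:ℝ)^4*(k:ℝ)^6*cos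 v^6*sin v^4*cos ((r:ℝ)*u)^2 + 23*(r:ℝ)^4*(k:ℝ)^6*cos v^6*sin v^4*sin ((r:ℝ)*u)^2 + -20*(r:ℝ)^4*(k:ℝ)^6*cos v^6*sin v^6*cos ((r:ℝ)*u)^2 + -20*(r:ℝ)^4*(k:ℝ)^6*cos v^6*sin v^6*sin ((r:ℝ)*u)^2 + 2*(r:ℝ)^4*(k:ℝ)^6*cos v^8*sin v^2*cos ((r:ℝ)*u)^2 + 2*(r:ℝ)^4*(k:ℝ)^6*cos v^8*sin v^2*sin ((r:ℝ)*u)^2 + -23*(r:ℝ)^4*(k:ℝ)^6*cos v^8*sin v^4*cos ((r:ℝ)*u)^2 + -23*(r:ℝ)^4*(k:ℝ)^6*cos v^8*sin v^4*sin ((r:ℝ)*u)^2 + -2*(r:ℝ)^4*(k:ℝ)^6*cos v^10*sin v^2*cos ((r:ℝ)*u)^2 + -2*(r:ℝ)^4*(k:ℝ)^6*cos v^10*sin v^2*sin ((r:ℝ)*u)^2 + 2*(r:ℝ)^6*(k:ℝ)^4*cos v^4*sin v^6*cos ((r:ℝ)*u)^2 + 2*(r:ℝ)^6*(k:ℝ)^4*cos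 v^4*sin v^6*sin ((r:ℝ)*u)^2 + 23*(r:ℝ)^6*(k:ℝ)^4*cos v^6*sin v^4*cos ((r:ℝ)*u)^2 + 23*(r:ℝ)^6*(k:ℝ)^4*cos v^6*sin v^4*sin ((r:ℝ)*u)^2 + -2*(r:ℝ)^6*(k:ℝ)^4*cos v^6*sin v^6*cos ((r:ℝ)*u)^2 + -2*(r:ℝ)^6*(k:ℝ)^4*cos v^6*sin v^6*sin ((r:ℝ)*u)^2 + 20*(r:ℝ)^6*(k:ℝ)^4*cos v^8*sin v^2*cos ((r:ℝ)*u)^2 + 20*(r:ℝ)^6*(k:ℝ)^4*cos v^8*sin v^2*sin ((r:ℝ)*u)^2 + -23*(r:ℝ)^6*(k:ℝ)^4*cos v^8*sin v^4*cos ((r:ℝ)*u)^2 + -23*(r:ℝ)^6*(k:ℝ)^4*cos v^8*sin v^4*sin ((r:ℝ)*u)^2 + (r:ℝ)^6*(k:ℝ)^4*cos v^10*cos ((r:ℝ)*u)^2 + (r:ℝ)^6*(k:ℝ)^4*cos v^10*sin ((r:ℝ)*u)^2 + -20*(r:ℝ)^6*(k:ℝ)^4*cos v^10*sin v^2*cos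 ((r:ℝ)*u)^2 + -20*(r:ℝ)^6*(k:ℝ)^4*cos v^10*sin v^2*sin ((r:ℝ)*u)^2 + -1*(r:ℝ)^6*(k:ℝ)^4*cos v^12*cos ((r:ℝ)*u)^2 + -1*(r:ℝ)^6*(k:ℝ)^4*cos v^12*sin ((r:ℝ)*u)^2 + (r:ℝ)^8*(k:ℝ)^2*cos v^6*sin v^4*cos ((r:ℝ)*u)^2 + (r:ℝ)^8*(k:ℝ)^2*cos v^6*sin v^4*sin ((r:ℝ)*u)^2 + 10*(r:ℝ)^8*(k:ℝ)^2*cos v^8*sin v^2*cos ((r:ℝ)*u)^2 + 10*(r:ℝ)^8*(k:ℝ)^2*cos v^8*sin v^2*sin ((r:ℝ)*u)^2 + -1*(r:ℝ)^8*(k:ℝ)^2*cos v^8*sin v^4*cos ((r:ℝ)*u)^2 + -1*(r:ℝ)^8*(k:ℝ)^2*cos v^8*sin v^4*sin ((r:ℝ)*u)^2 + 6*(r:ℝ)^8*(k:ℝ)^2*cos v^10*cos ((r:ℝ)*u)^2 + 6*(r:ℝ)^8*(k:ℝ)^2*cos v^10*sin ((r:ℝ)*u)^2 + -10*(r:ℝ)^8*(k:ℝ)^2*cos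 v^10*sin v^2*cos ((r:ℝ)*u)^2 + -10*(r:ℝ)^8*(k:ℝ)^2*cos v^10*sin v^2*sin ((r:ℝ)*u)^2 + -6*(r:ℝ)^8*(k:ℝ)^2*cos v^12*cos ((r:ℝ)*u)^2 + -6*(r:ℝ)^8*(k:ℝ)^2*cos v^12*sin ((r:ℝ)*u)^2 + (r:ℝ)^10*cos v^10*cos ((r:ℝ)*u)^2 + (r:ℝ)^10*cos v^10*sin ((r:ℝ)*u)^2 + -1*(r:ℝ)^10*cos v^12*cos ((r:ℝ)*u)^2 + -1*(r:ℝ)^10*cos v^12*sin ((r:ℝ)*u)^2) * sin_sq_add_cos_sq ((k:ℝ)*u) + ((k:ℝ)^10*cos v^2*sin v^8 + -1*(k:ℝ)^10*cos v^4*sin v^8 + 6*(r:ℝ)^2*(k:ℝ)^8*cos v^2*sin v^8 + 10*(r:ℝ)^2*(k:ℝ)^8*cos v^4*sin v^6 + -6*(r:ℝ)^2*(k:ℝ)^8*cos v^4*sin v^8 + (r:ℝ)^2*(k:ℝ)^8*cos v^6*sin v^4 + -10*(r:ℝ)^2*(k:ℝ)^8*cos v^6*sin v^6 + -1*(r:ℝ)^2*(k:ℝ)^8*cos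 v^8*sin v^4 + (r:ℝ)^4*(k:ℝ)^6*cos v^2*sin v^8 + 20*(r:ℝ)^4*(k:ℝ)^6*cos v^4*sin v^6 + -1*(r:ℝ)^4*(k:ℝ)^6*cos v^4*sin v^8 + 23*(r:ℝ)^4*(k:ℝ)^6*cos v^6*sin v^4 + -20*(r:ℝ)^4*(k:ℝ)^6*cos v^6*sin v^6 + 2*(r:ℝ)^4*(k:ℝ)^6*cos v^8*sin v^2 + -23*(r:ℝ)^4*(k:ℝ)^6*cos v^8*sin v^4 + -2*(r:ℝ)^4*(k:ℝ)^6*cos v^10*sin v^2 + 2*(r:ℝ)^6*(k:ℝ)^4*cos v^4*sin v^6 + 23*(r:ℝ)^6*(k:ℝ)^4*cos v^6*sin v^4 + -2*(r:ℝ)^6*(k:ℝ)^4*cos v^6*sin v^6 + 20*(r:ℝ)^6*(k:ℝ)^4*cos v^8*sin v^2 + -23*(r:ℝ)^6*(k:ℝ)^4*cos v^8*sin v^4 + (r:ℝ)^6*(k:ℝ)^4*cos v^10 + -20*(r:ℝ)^6*(k:ℝ)^4*cos v^10*sin v^2 + -1*(r:ℝ)^6*(k:ℝ)^4*cos v^12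 + (r:ℝ)^8*(k:ℝ)^2*cos v^6*sin v^4 + 10*(r:ℝ)^8*(k:ℝ)^2*cos v^8*sin v^2 + -1*(r:ℝ)^8*(k:ℝ)^2*cos v^8*sin v^4 + 6*(r:ℝ)^8*(k:ℝ)^2*cos v^10 + -10*(r:ℝ)^8*(k:ℝ)^2*cos v^10*sin v^2 + -6*(r:ℝ)^8*(k:ℝ)^2*cos v^12 + (r:ℝ)^10*cos v^10 + -1*(r:ℝ)^10*cos v^12) * sin_sq_add_cos_sq ((r:ℝ)*u)
end

section
/- Suppose in addition that r and k are coprime odd integers with rk ≡ 3 (mod 4); set n = (r+k)/2 (even), m = (r−k)/2 (odd), and β = 2·sqrt(mn)/(m+n). Define q : ℝ → ℝ by q(v) = ∫₀^v dt / sqrt(1 − β² sin²(t)). Then q is a strictly increasing bijection of ℝ (since 0 < β < 1), and for all (u,v) ∈ ℝ²: Ĩ(u + π/2, q⁻¹(q(π/2) − q(v))) = Ĩ(u, v). (This extra orientation-reversing symmetry makes the bipolar surface τ̃_{r,k} a Klein bottle when rk ≡ 3 mod 4.) -/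
open Real

section Helpers

variable {R K : ℝ}

lemma lawsonP_pos (hK : 0 < K) (hKR : K ≤ R) (v : ℝ) :
    0 < R ^ 2 * cos v ^ 2 + K ^ 2 * sin v ^ 2 := by
  have hRK2 : K ^ 2 ≤ R ^ 2 := by nlinarith
  have h1 := mul_le_mul_of_nonneg_right hRK2 (sq_nonneg (cos v))
  have h2 : K ^ 2 * (sin v ^ 2 + cos v ^ 2) = K ^ 2 := by rw [sin_sq_add_cos_sq]; ring
  nlinarith [sq_nonneg K]

lemma lawsonD_pos (hK : 0 < K) (hKR : K ≤ R) (v : ℝ) : 0 < lawsonD R K v :=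
  Real.sqrt_pos.2 (lawsonP_pos hK hKR v)

lemma lawsonD_sq (v : ℝ) : lawsonD R K v ^ 2 = R ^ 2 * cos v ^ 2 + K ^ 2 * sin v ^ 2 :=
  Real.sq_sqrt (by positivity)

lemma lawsonD_le (hK : 0 < K) (hKR : K ≤ R) (v : ℝ) : lawsonD R K v ≤ R := by
  have h : R ^ 2 * cos v ^ 2 + K ^ 2 * sin v ^ 2 ≤ R ^ 2 := by
    have hRK2 : K ^ 2 ≤ R ^ 2 := by nlinarith
    have h1 := mul_le_mul_of_nonneg_right hRK2 (sq_nonneg (sin v))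
    have h2 : R ^ 2 * (sin v ^ 2 + cos v ^ 2) = R ^ 2 := by rw [sin_sq_add_cos_sq]; ring
    linarith
  calc lawsonD R K v ≤ Real.sqrt (R ^ 2) := Real.sqrt_le_sqrt h
    _ = R := by rw [Real.sqrt_sq (by linarith)]

lemma hasDerivAt_lawsonP (v : ℝ) :
    HasDerivAt (fun v => R ^ 2 * cos v ^ 2 + K ^ 2 * sin v ^ 2)
      (2 * (K ^ 2 - R ^ 2) * sin v * cos v) v := by
  have h1 := ((Real.hasDerivAt_cos v).pow 2).const_mul (R ^ 2)
  have h2 := ((Real.hasDerivAt_sin v).pow 2).const_mul (K ^ 2)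
  refine (h1.add h2).congr_deriv ?_
  ring

lemma hasDerivAt_lawsonD (hK : 0 < K) (hKR : K ≤ R) (v : ℝ) :
    HasDerivAt (lawsonD R K) ((K ^ 2 - R ^ 2) * sin v * cos v / lawsonD R K v) v := by
  have h := (hasDerivAt_lawsonP (R := R) (K := K) v).sqrt (ne_of_gt (lawsonP_pos hK hKR v))
  refine h.congr_deriv ?_
  have hD := lawsonD_pos hK hKR v
  rw [show Real.sqrt (R ^ 2 * cos v ^ 2 + K ^ 2 * sin v ^ 2) = lawsonD R K v from rfl]
  field_simp

/-- The function `v ↦ π/2 - ∫₀ᵛ RK/D(t)²`, which turns out to be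
`q⁻¹ ∘ (q(π/2) - q)`. -/
noncomputable def Wfun (R K : ℝ) (v : ℝ) : ℝ :=
  π / 2 - ∫ t in (0:ℝ)..v, R * K / (R ^ 2 * cos t ^ 2 + K ^ 2 * sin t ^ 2)

lemma continuous_Winteg (hK : 0 < K) (hKR : K ≤ R) :
    Continuous fun t => R * K / (R ^ 2 * cos t ^ 2 + K ^ 2 * sin t ^ 2) :=
  continuous_const.div (by fun_prop) (fun t => ne_of_gt (lawsonP_pos hK hKR t))

lemma hasDerivAt_Wfun (hK : 0 < K) (hKR : K ≤ R) (v : ℝ) :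
    HasDerivAt (Wfun R K) (-(R * K / (R ^ 2 * cos v ^ 2 + K ^ 2 * sin v ^ 2))) v := by
  have hc := continuous_Winteg hK hKR
  have h := intervalIntegral.integral_hasDerivAt_right (hc.intervalIntegrable 0 v)
    (hc.stronglyMeasurableAtFilter _ _) hc.continuousAt
  have := (hasDerivAt_const v (π / 2)).sub h
  simp only [zero_sub] at this
  exact this

lemma Wfun_zero : Wfun R K 0 = π / 2 := by simp [Wfun]

lemma continuous_lawsonD : Continuous (lawsonD R K) :=
  Real.continuous_sqrt.comp (by fun_prop)

lemma hasDerivAt_RcosD (hK : 0 < K) (hKR : K ≤ R) (x : ℝ) :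
    HasDerivAt (fun v => R * cos v / lawsonD R K v)
      (-(R * K ^ 2 * sin x) / lawsonD R K x ^ 3) x := by
  have hDne : lawsonD R K x ≠ 0 := ne_of_gt (lawsonD_pos hK hKR x)
  have h := ((Real.hasDerivAt_cos x).const_mul R).div (hasDerivAt_lawsonD hK hKR x) hDne
  refine h.congr_deriv ?_
  have hD2 := lawsonD_sq (R := R) (K := K) x
  have hpy := sin_sq_add_cos_sq x
  field_simp
  linear_combination (-(R * sin x)) * hD2 +
    (-(R * sin x * K ^ 2)) * hpy

lemma hasDerivAt_KsinD (hK : 0 < K) (hKR : K ≤ R) (x : ℝ) :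
    HasDerivAt (fun v => K * sin v / lawsonD R K v)
      (K * R ^ 2 * cos x / lawsonD R K x ^ 3) x := by
  have hDne : lawsonD R K x ≠ 0 := ne_of_gt (lawsonD_pos hK hKR x)
  have h := ((Real.hasDerivAt_sin x).const_mul K).div (hasDerivAt_lawsonD hK hKR x) hDne
  refine h.congr_deriv ?_
  have hD2 := lawsonD_sq (R := R) (K := K) x
  have hpy := sin_sq_add_cos_sq x
  field_simp
  linear_combination (cos x) * hD2 +
    (cos x * R ^ 2) * hpy

lemma sin_cos_Wfun (hK : 0 < K) (hKR : K ≤ R) (v : ℝ) :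
    sin (Wfun R K v) = R * cos v / lawsonD R K v ∧
    cos (Wfun R K v) = K * sin v / lawsonD R K v := by
  set a : ℝ → ℝ := fun v => sin (Wfun R K v) - R * cos v / lawsonD R K v with ha
  set b : ℝ → ℝ := fun v => cos (Wfun R K v) - K * sin v / lawsonD R K v with hb
  have hDne : ∀ x, lawsonD R K x ≠ 0 := fun x => ne_of_gt (lawsonD_pos hK hKR x)
  have hPD : ∀ x, R ^ 2 * cos x ^ 2 + K ^ 2 * sin x ^ 2 = lawsonD R K x ^ 2 :=
    fun x => (lawsonD_sq x).symm
  have ha' : ∀ x, HasDerivAt a (-(R * K / lawsonD R K x ^ 2) * b x) x := by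
    intro x
    have h1 : HasDerivAt (fun v => sin (Wfun R K v))
        (cos (Wfun R K x) * -(R * K / (R ^ 2 * cos x ^ 2 + K ^ 2 * sin x ^ 2))) x :=
      (Real.hasDerivAt_sin (Wfun R K x)).comp x (hasDerivAt_Wfun hK hKR x)
    have h3 := h1.sub (hasDerivAt_RcosD hK hKR x)
    refine h3.congr_deriv ?_
    rw [hb, hPD x]
    have := hDne x
    field_simp
    ring
  have hb' : ∀ x, HasDerivAt b ((R * K / lawsonD R K x ^ 2) * a x) x := by
    intro x
    have h1 : HasDerivAt (fun v => cos (Wfun R K v))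
        ((-sin (Wfun R K x)) * -(R * K / (R ^ 2 * cos x ^ 2 + K ^ 2 * sin x ^ 2))) x :=
      (Real.hasDerivAt_cos (Wfun R K x)).comp x (hasDerivAt_Wfun hK hKR x)
    have h3 := h1.sub (hasDerivAt_KsinD hK hKR x)
    refine h3.congr_deriv ?_
    rw [ha, hPD x]
    have := hDne x
    field_simp
  set E : ℝ → ℝ := fun v => a v ^ 2 + b v ^ 2 with hE
  have hE' : ∀ x, HasDerivAt E 0 x := by
    intro x
    have := (((ha' x).pow 2).add ((hb' x).pow 2))
    refine this.congr_deriv ?_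
    ring
  have hconst : ∀ x, E x = E 0 :=
    fun x => is_const_of_deriv_eq_zero (fun y => (hE' y).differentiableAt)
      (fun y => (hE' y).deriv) x 0
  have hR : 0 < R := lt_of_lt_of_le hK hKR
  have hD0 : lawsonD R K 0 = R := by
    simp only [lawsonD, Real.cos_zero, Real.sin_zero]
    rw [show R ^ 2 * 1 ^ 2 + K ^ 2 * 0 ^ 2 = R ^ 2 by ring, Real.sqrt_sq (by linarith)]
  have ha0 : a 0 = 0 := by
    rw [ha]
    simp only [Wfun_zero, Real.sin_pi_div_two, Real.cos_zero, hD0, mul_one]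
    field_simp
    norm_num
  have hb0 : b 0 = 0 := by
    rw [hb]
    simp [Wfun_zero, hD0]
  have hE0 : E 0 = 0 := by rw [hE]; simp only [ha0, hb0]; ring
  have hEv : a v ^ 2 + b v ^ 2 = 0 := by
    have h := hconst v
    rw [hE0] at h
    simpa [hE] using h
  have hav : a v = 0 ∧ b v = 0 := by
    constructor <;> nlinarith [sq_nonneg (a v), sq_nonneg (b v)]
  constructor
  · have h := hav.1; simp only [ha] at h; linarith
  · have h := hav.2; simp only [hb] at h; linarith

lemma lawsonD_Wfun (hK : 0 < K) (hKR : K ≤ R) (v : ℝ) :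
    lawsonD R K (Wfun R K v) = R * K / lawsonD R K v := by
  obtain ⟨hs, hc⟩ := sin_cos_Wfun hK hKR v
  have hD := lawsonD_pos hK hKR v
  have hR : 0 < R := lt_of_lt_of_le hK hKR
  have key : R ^ 2 * cos (Wfun R K v) ^ 2 + K ^ 2 * sin (Wfun R K v) ^ 2
      = (R * K / lawsonD R K v) ^ 2 := by
    rw [hs, hc]
    linear_combination (R ^ 2 * K ^ 2 / lawsonD R K v ^ 2) * sin_sq_add_cos_sq v
  rw [lawsonD, key, Real.sqrt_sq (le_of_lt (div_pos (mul_pos hR hK) hD))]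

lemma hasDerivAt_qfun (hK : 0 < K) (hKR : K ≤ R) (v : ℝ) :
    HasDerivAt (fun v => ∫ t in (0:ℝ)..v, R / lawsonD R K t) (R / lawsonD R K v) v := by
  have hc : Continuous fun t => R / lawsonD R K t :=
    continuous_const.div continuous_lawsonD (fun t => ne_of_gt (lawsonD_pos hK hKR t))
  exact intervalIntegral.integral_hasDerivAt_right (hc.intervalIntegrable 0 v)
    (hc.stronglyMeasurableAtFilter _ _) hc.continuousAt

set_option maxHeartbeats 1000000 in
lemma bipolar_shift (u v w ε : ℝ) (hK : 0 < K) (hKR : K ≤ R)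
    (hε : ε = 1 ∨ ε = -1)
    (hsw : sin w = R * cos v / lawsonD R K v)
    (hcw : cos w = K * sin v / lawsonD R K v)
    (e1 : sin (K * (u + π / 2)) = ε * cos (K * u))
    (e2 : cos (K * (u + π / 2)) = -(ε * sin (K * u)))
    (e3 : sin (R * (u + π / 2)) = -(ε * cos (R * u)))
    (e4 : cos (R * (u + π / 2)) = ε * sin (R * u)) :
    bipolarI R K (u + π / 2) w = bipolarI R K u v := by
  have hD := lawsonD_pos hK hKR v
  have hR : 0 < R := lt_of_lt_of_le hK hKR
  have hDw' : lawsonD R K w = R * K / lawsonD R K v := by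
    have key : R ^ 2 * cos w ^ 2 + K ^ 2 * sin w ^ 2 = (R * K / lawsonD R K v) ^ 2 := by
      rw [hsw, hcw]
      linear_combination (R ^ 2 * K ^ 2 / lawsonD R K v ^ 2) * sin_sq_add_cos_sq v
    rw [lawsonD, key, Real.sqrt_sq (le_of_lt (div_pos (mul_pos hR hK) hD))]
  funext i
  rcases hε with hε | hε <;> subst hε <;>
  fin_cases i <;>
  simp only [bipolarI, Matrix.cons_val_zero, Matrix.cons_val_one, Matrix.head_cons,
    Matrix.cons_val_two, Matrix.tail_cons, Matrix.cons_val_three, Matrix.cons_val_four,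
    Fin.isValue, Fin.reduceFinMk, Matrix.cons_val, hDw', hsw, hcw, e1, e2, e3, e4] <;>
  field_simp <;>
  ring

end Helpers

/-- When `rk ≡ 3 (mod 4)`, the extra orientation-reversing symmetry
`(u,v) ↦ (u + π/2, q⁻¹(q(π/2) − q(v)))` of `Ĩ` makes `τ̃_{r,k}` a Klein bottle. -/
theorem stmt_4 (r k : ℤ) (hk : 0 < k) (hrk : k < r) (hcop : IsCoprime r k)
    (hro : Odd r) (hko : Odd k) (hmod : r * k % 4 = 3)
    (n m β : ℝ) (hn : n = ((r : ℝ) + (k : ℝ)) / 2) (hm : m = ((r : ℝ) - (k : ℝ)) / 2)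
    (hβ : β = 2 * Real.sqrt (m * n) / (m + n))
    (q : ℝ → ℝ) (hq : ∀ v, q v = ∫ t in (0:ℝ)..v, 1 / Real.sqrt (1 - β ^ 2 * sin t ^ 2)) :
    StrictMono q ∧ Function.Bijective q ∧
    ∀ u v : ℝ,
      bipolarI r k (u + π / 2) (Function.invFun q (q (π / 2) - q v)) = bipolarI r k u v := by
  have hK : (0:ℝ) < (k:ℝ) := by exact_mod_cast hk
  have hKRlt : (k:ℝ) < (r:ℝ) := by exact_mod_cast hrk
  have hKR : (k:ℝ) ≤ (r:ℝ) := le_of_lt hKRlt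
  have hR : (0:ℝ) < (r:ℝ) := lt_of_lt_of_le hK hKR
  have hm' : 0 < m := by rw [hm]; linarith
  have hn' : 0 < n := by rw [hn]; linarith
  have hmn : m + n = (r:ℝ) := by rw [hm, hn]; ring
  have hβ2 : β ^ 2 = ((r:ℝ) ^ 2 - (k:ℝ) ^ 2) / (r:ℝ) ^ 2 := by
    rw [hβ, hmn, div_pow, mul_pow, Real.sq_sqrt (mul_nonneg hm'.le hn'.le), hm, hn]
    field_simp
    ring
  -- rewrite q as an integral of R / D
  have hq' : q = fun v => ∫ t in (0:ℝ)..v, (r:ℝ) / lawsonD (r:ℝ) (k:ℝ) t := by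
    funext v
    rw [hq]
    apply intervalIntegral.integral_congr
    intro t _
    have hDpos := lawsonD_pos hK hKR t
    have h1 : 1 - β ^ 2 * sin t ^ 2 = (lawsonD (r:ℝ) (k:ℝ) t / (r:ℝ)) ^ 2 := by
      rw [hβ2, div_pow, lawsonD_sq]
      field_simp
      linear_combination (-(r:ℝ) ^ 2) * sin_sq_add_cos_sq t
    show 1 / Real.sqrt (1 - β ^ 2 * sin t ^ 2) = (r:ℝ) / lawsonD (r:ℝ) (k:ℝ) t
    rw [h1, Real.sqrt_sq (le_of_lt (div_pos hDpos hR))]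
    rw [one_div_div]
  subst hq'
  have hder : ∀ x : ℝ, HasDerivAt (fun v => ∫ t in (0:ℝ)..v, (r:ℝ) / lawsonD (r:ℝ) (k:ℝ) t)
      ((r:ℝ) / lawsonD (r:ℝ) (k:ℝ) x) x := hasDerivAt_qfun hK hKR
  have hmono : StrictMono (fun v => ∫ t in (0:ℝ)..v, (r:ℝ) / lawsonD (r:ℝ) (k:ℝ) t) := by
    apply strictMono_of_deriv_pos
    intro x
    rw [(hder x).deriv]
    exact div_pos hR (lawsonD_pos hK hKR x)
  have hcont : Continuous (fun v => ∫ t in (0:ℝ)..v, (r:ℝ) / lawsonD (r:ℝ) (k:ℝ) t) :=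
    continuous_iff_continuousAt.2 fun x => (hder x).differentiableAt.continuousAt
  have hIc : Continuous fun t => (r:ℝ) / lawsonD (r:ℝ) (k:ℝ) t :=
    continuous_const.div continuous_lawsonD (fun t => ne_of_gt (lawsonD_pos hK hKR t))
  have hone : ∀ t : ℝ, (1:ℝ) ≤ (r:ℝ) / lawsonD (r:ℝ) (k:ℝ) t := fun t =>
    (one_le_div (lawsonD_pos hK hKR t)).2 (lawsonD_le hK hKR t)
  have hge : ∀ x : ℝ, 0 ≤ x → x ≤ ∫ t in (0:ℝ)..x, (r:ℝ) / lawsonD (r:ℝ) (k:ℝ) t := by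
    intro x hx
    have h := intervalIntegral.integral_mono_on (μ := MeasureTheory.volume) (f := fun _ => (1:ℝ)) hx
      (intervalIntegrable_const) (hIc.intervalIntegrable 0 x) (fun t _ => hone t)
    simpa using h
  have hle : ∀ x : ℝ, x ≤ 0 → (∫ t in (0:ℝ)..x, (r:ℝ) / lawsonD (r:ℝ) (k:ℝ) t) ≤ x := by
    intro x hx
    have h := intervalIntegral.integral_mono_on (μ := MeasureTheory.volume) (f := fun _ => (1:ℝ)) hx
      (intervalIntegrable_const) (hIc.intervalIntegrable x 0) (fun t _ => hone t)
    rw [intervalIntegral.integral_symm]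
    simp only [intervalIntegral.integral_const, smul_eq_mul, mul_one] at h
    linarith
  have htop : Filter.Tendsto (fun v => ∫ t in (0:ℝ)..v, (r:ℝ) / lawsonD (r:ℝ) (k:ℝ) t)
      Filter.atTop Filter.atTop := by
    apply Filter.tendsto_atTop_mono' Filter.atTop
      ((Filter.eventually_ge_atTop (0:ℝ)).mono fun x hx => hge x hx) Filter.tendsto_id
  have hbot : Filter.Tendsto (fun v => ∫ t in (0:ℝ)..v, (r:ℝ) / lawsonD (r:ℝ) (k:ℝ) t)
      Filter.atBot Filter.atBot := by
    apply Filter.tendsto_atBot_mono' Filter.atBot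
      ((Filter.eventually_le_atBot (0:ℝ)).mono fun x hx => hle x hx) Filter.tendsto_id
  have hsurj := hcont.surjective htop hbot
  refine ⟨hmono, ⟨hmono.injective, hsurj⟩, ?_⟩
  intro u v
  obtain ⟨hsw, hcw⟩ := sin_cos_Wfun hK hKR v
  -- the additive relation q (W v) + q v = q (π/2)
  have hkey : (∫ t in (0:ℝ)..(Wfun (r:ℝ) (k:ℝ) v), (r:ℝ) / lawsonD (r:ℝ) (k:ℝ) t)
      + (∫ t in (0:ℝ)..v, (r:ℝ) / lawsonD (r:ℝ) (k:ℝ) t)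
      = ∫ t in (0:ℝ)..(π/2), (r:ℝ) / lawsonD (r:ℝ) (k:ℝ) t := by
    set F : ℝ → ℝ := fun x => (∫ t in (0:ℝ)..(Wfun (r:ℝ) (k:ℝ) x), (r:ℝ) / lawsonD (r:ℝ) (k:ℝ) t)
      + (∫ t in (0:ℝ)..x, (r:ℝ) / lawsonD (r:ℝ) (k:ℝ) t) with hF
    have hF' : ∀ x, HasDerivAt F 0 x := by
      intro x
      have h1 := ((hder (Wfun (r:ℝ) (k:ℝ) x)).comp x (hasDerivAt_Wfun hK hKR x)).add (hder x)
      refine h1.congr_deriv ?_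
      rw [lawsonD_Wfun hK hKR x, show (r:ℝ)^2 * cos x ^ 2 + (k:ℝ)^2 * sin x ^ 2
        = lawsonD (r:ℝ) (k:ℝ) x ^ 2 from (lawsonD_sq x).symm]
      have hD := lawsonD_pos hK hKR x
      field_simp
      ring
    have hc := is_const_of_deriv_eq_zero (fun y => (hF' y).differentiableAt)
      (fun y => (hF' y).deriv) v 0
    have hF0 : F 0 = ∫ t in (0:ℝ)..(π/2), (r:ℝ) / lawsonD (r:ℝ) (k:ℝ) t := by
      rw [hF]
      simp [Wfun_zero]
    rw [hF0] at hc
    exact hc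
  have hinvw : Function.invFun (fun v => ∫ t in (0:ℝ)..v, (r:ℝ) / lawsonD (r:ℝ) (k:ℝ) t)
      ((∫ t in (0:ℝ)..(π/2), (r:ℝ) / lawsonD (r:ℝ) (k:ℝ) t)
        - ∫ t in (0:ℝ)..v, (r:ℝ) / lawsonD (r:ℝ) (k:ℝ) t)
      = Wfun (r:ℝ) (k:ℝ) v := by
    rw [show (∫ t in (0:ℝ)..(π/2), (r:ℝ) / lawsonD (r:ℝ) (k:ℝ) t)
        - (∫ t in (0:ℝ)..v, (r:ℝ) / lawsonD (r:ℝ) (k:ℝ) t)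
      = ∫ t in (0:ℝ)..(Wfun (r:ℝ) (k:ℝ) v), (r:ℝ) / lawsonD (r:ℝ) (k:ℝ) t by linarith]
    exact Function.leftInverse_invFun hmono.injective _
  rw [hinvw]
  -- residues of r and k mod 4
  obtain ⟨tk, htk⟩ := hko
  obtain ⟨tr, htr⟩ := hro
  have hk4 : k % 4 = 1 ∨ k % 4 = 3 := by omega
  have hr4 : r % 4 = 1 ∨ r % 4 = 3 := by omega
  have hmul := Int.mul_emod r k 4
  rcases hk4 with hk4 | hk4 <;> rcases hr4 with hr4 | hr4
  · rw [hk4, hr4] at hmul; omega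
  · -- k ≡ 1, r ≡ 3 : ε = 1
    obtain ⟨b, hb⟩ : ∃ b : ℤ, k = 4 * b + 1 := ⟨k / 4, by omega⟩
    obtain ⟨a, ha⟩ : ∃ a : ℤ, r = 4 * a + 3 := ⟨r / 4, by omega⟩
    refine bipolar_shift u v _ 1 hK hKR (Or.inl rfl) hsw hcw ?_ ?_ ?_ ?_
    · rw [show (k:ℝ) * (u + π / 2) = ((k:ℝ) * u + π / 2) + (b:ℝ) * (2 * π) by
        rw [hb]; push_cast; ring]
      rw [Real.sin_add_int_mul_two_pi, Real.sin_add_pi_div_two, one_mul]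
    · rw [show (k:ℝ) * (u + π / 2) = ((k:ℝ) * u + π / 2) + (b:ℝ) * (2 * π) by
        rw [hb]; push_cast; ring]
      rw [Real.cos_add_int_mul_two_pi, Real.cos_add_pi_div_two, one_mul]
    · rw [show (r:ℝ) * (u + π / 2) = (((r:ℝ) * u + π) + π / 2) + (a:ℝ) * (2 * π) by
        rw [ha]; push_cast; ring]
      rw [Real.sin_add_int_mul_two_pi, Real.sin_add_pi_div_two, Real.cos_add_pi, one_mul]
    · rw [show (r:ℝ) * (u + π / 2) = (((r:ℝ) * u + π) + π / 2) + (a:ℝ) * (2 * π) by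
        rw [ha]; push_cast; ring]
      rw [Real.cos_add_int_mul_two_pi, Real.cos_add_pi_div_two, Real.sin_add_pi, one_mul,
        neg_neg]
  · -- k ≡ 3, r ≡ 1 : ε = -1
    obtain ⟨b, hb⟩ : ∃ b : ℤ, k = 4 * b + 3 := ⟨k / 4, by omega⟩
    obtain ⟨a, ha⟩ : ∃ a : ℤ, r = 4 * a + 1 := ⟨r / 4, by omega⟩
    refine bipolar_shift u v _ (-1) hK hKR (Or.inr rfl) hsw hcw ?_ ?_ ?_ ?_
    · rw [show (k:ℝ) * (u + π / 2) = (((k:ℝ) * u + π) + π / 2) + (b:ℝ) * (2 * π) by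
        rw [hb]; push_cast; ring]
      rw [Real.sin_add_int_mul_two_pi, Real.sin_add_pi_div_two, Real.cos_add_pi]
      ring
    · rw [show (k:ℝ) * (u + π / 2) = (((k:ℝ) * u + π) + π / 2) + (b:ℝ) * (2 * π) by
        rw [hb]; push_cast; ring]
      rw [Real.cos_add_int_mul_two_pi, Real.cos_add_pi_div_two, Real.sin_add_pi]
      ring
    · rw [show (r:ℝ) * (u + π / 2) = ((r:ℝ) * u + π / 2) + (a:ℝ) * (2 * π) by
        rw [ha]; push_cast; ring]
      rw [Real.sin_add_int_mul_two_pi, Real.sin_add_pi_div_two]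
      ring
    · rw [show (r:ℝ) * (u + π / 2) = ((r:ℝ) * u + π / 2) + (a:ℝ) * (2 * π) by
        rw [ha]; push_cast; ring]
      rw [Real.cos_add_int_mul_two_pi, Real.cos_add_pi_div_two]
      ring
  · rw [hk4, hr4] at hmul; omega
end

section
/- If twice differentiable functions φ₁, φ₂ : ℝ → ℝ satisfy φ₁''(y) = (m² − 2(m²φ₁² + n²φ₂²))φ₁ and φ₂''(y) = (n² − 2(m²φ₁² + n²φ₂²))φ₂ for all y, then the quantity E₁(y) = (m²φ₁(y)² + n²φ₂(y)²)² − (m⁴φ₁(y)² + n⁴φ₂(y)²) + m²(φ₁'(y))² + n²(φ₂'(y))² is constant in y (E₁ is a first integral of the system). -/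
/-- `E₁` is a first integral of the minimal-surface ODE system. -/
theorem stmt_5 (n m : ℝ) (hm : 0 < m) (hmn : m < n) (φ₁ φ₂ : ℝ → ℝ)
    (hφ₁ : Differentiable ℝ φ₁) (hφ₁' : Differentiable ℝ (deriv φ₁))
    (hφ₂ : Differentiable ℝ φ₂) (hφ₂' : Differentiable ℝ (deriv φ₂))
    (ode₁ : ∀ y, deriv (deriv φ₁) y =
      (m ^ 2 - 2 * (m ^ 2 * φ₁ y ^ 2 + n ^ 2 * φ₂ y ^ 2)) * φ₁ y)
    (ode₂ : ∀ y, deriv (deriv φ₂) y =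
      (n ^ 2 - 2 * (m ^ 2 * φ₁ y ^ 2 + n ^ 2 * φ₂ y ^ 2)) * φ₂ y) :
    ∀ y z : ℝ,
      (m ^ 2 * φ₁ y ^ 2 + n ^ 2 * φ₂ y ^ 2) ^ 2 - (m ^ 4 * φ₁ y ^ 2 + n ^ 4 * φ₂ y ^ 2)
        + m ^ 2 * (deriv φ₁ y) ^ 2 + n ^ 2 * (deriv φ₂ y) ^ 2 =
      (m ^ 2 * φ₁ z ^ 2 + n ^ 2 * φ₂ z ^ 2) ^ 2 - (m ^ 4 * φ₁ z ^ 2 + n ^ 4 * φ₂ z ^ 2)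
        + m ^ 2 * (deriv φ₁ z) ^ 2 + n ^ 2 * (deriv φ₂ z) ^ 2 := by
  set E : ℝ → ℝ := fun y =>
      (m ^ 2 * φ₁ y ^ 2 + n ^ 2 * φ₂ y ^ 2) ^ 2 - (m ^ 4 * φ₁ y ^ 2 + n ^ 4 * φ₂ y ^ 2)
        + m ^ 2 * (deriv φ₁ y) ^ 2 + n ^ 2 * (deriv φ₂ y) ^ 2 with hE
  have key : ∀ y, HasDerivAt E 0 y := by
    intro y
    have h1 : HasDerivAt φ₁ (deriv φ₁ y) y := (hφ₁ y).hasDerivAt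
    have h2 : HasDerivAt φ₂ (deriv φ₂ y) y := (hφ₂ y).hasDerivAt
    have h1' : HasDerivAt (deriv φ₁) (deriv (deriv φ₁) y) y := (hφ₁' y).hasDerivAt
    have h2' : HasDerivAt (deriv φ₂) (deriv (deriv φ₂) y) y := (hφ₂' y).hasDerivAt
    have hA : HasDerivAt (fun y => m ^ 2 * φ₁ y ^ 2 + n ^ 2 * φ₂ y ^ 2)
        (m ^ 2 * (2 * φ₁ y ^ 1 * deriv φ₁ y) + n ^ 2 * (2 * φ₂ y ^ 1 * deriv φ₂ y)) y :=
      ((h1.pow 2).const_mul _).add ((h2.pow 2).const_mul _)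
    have hB : HasDerivAt (fun y => m ^ 4 * φ₁ y ^ 2 + n ^ 4 * φ₂ y ^ 2)
        (m ^ 4 * (2 * φ₁ y ^ 1 * deriv φ₁ y) + n ^ 4 * (2 * φ₂ y ^ 1 * deriv φ₂ y)) y :=
      ((h1.pow 2).const_mul _).add ((h2.pow 2).const_mul _)
    have hC : HasDerivAt (fun y => m ^ 2 * deriv φ₁ y ^ 2)
        (m ^ 2 * (2 * deriv φ₁ y ^ 1 * deriv (deriv φ₁) y)) y := (h1'.pow 2).const_mul _
    have hD : HasDerivAt (fun y => n ^ 2 * deriv φ₂ y ^ 2)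
        (n ^ 2 * (2 * deriv φ₂ y ^ 1 * deriv (deriv φ₂) y)) y := (h2'.pow 2).const_mul _
    have hAll := (((hA.pow 2).sub hB).add hC).add hD
    have := (ode₁ y); have := (ode₂ y)
    convert hAll using 1
    case e'_4 => exact rfl
    case e'_5 => exact rfl
    case e'_8 => rfl
    rw [ode₁ y, ode₂ y]
    ring
  have hc : ∀ y z, E y = E z := by
    intro y z
    have : E = fun _ => E 0 := by
      funext t
      exact is_const_of_deriv_eq_zero (fun x => (key x).differentiableAt)
        (fun x => (key x).deriv) t 0
    rw [this]
  exact fun y z => hc y z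
end

section
/- If twice differentiable functions φ₁, φ₂ : ℝ → ℝ satisfy φ₁''(y) = (m² − 2(m²φ₁² + n²φ₂²))φ₁ and φ₂''(y) = (n² − 2(m²φ₁² + n²φ₂²))φ₂ for all y, then the quantity E₂(y) = n²(n²−m²)φ₂²(φ₂² − 1) + m²(n²−m²)φ₂²φ₁² + m²φ₂²(φ₁')² − 2m²φ₁φ₂φ₁'φ₂' + (φ₂')²((n²−m²) + m²φ₁²) is constant in y (E₂ is a second, independent first integral of the system). -/
/-- `E₂` is a second first integral of the minimal-surface ODE system. -/
theorem stmt_6 (n m : ℝ) (hm : 0 < m) (hmn : m < n) (φ₁ φ₂ : ℝ → ℝ)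
    (hφ₁ : Differentiable ℝ φ₁) (hφ₁' : Differentiable ℝ (deriv φ₁))
    (hφ₂ : Differentiable ℝ φ₂) (hφ₂' : Differentiable ℝ (deriv φ₂))
    (ode₁ : ∀ y, deriv (deriv φ₁) y =
      (m ^ 2 - 2 * (m ^ 2 * φ₁ y ^ 2 + n ^ 2 * φ₂ y ^ 2)) * φ₁ y)
    (ode₂ : ∀ y, deriv (deriv φ₂) y =
      (n ^ 2 - 2 * (m ^ 2 * φ₁ y ^ 2 + n ^ 2 * φ₂ y ^ 2)) * φ₂ y) :
    ∀ y z : ℝ,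
      n ^ 2 * (n ^ 2 - m ^ 2) * φ₂ y ^ 2 * (φ₂ y ^ 2 - 1)
        + m ^ 2 * (n ^ 2 - m ^ 2) * φ₂ y ^ 2 * φ₁ y ^ 2
        + m ^ 2 * φ₂ y ^ 2 * (deriv φ₁ y) ^ 2
        - 2 * m ^ 2 * φ₁ y * φ₂ y * deriv φ₁ y * deriv φ₂ y
        + (deriv φ₂ y) ^ 2 * ((n ^ 2 - m ^ 2) + m ^ 2 * φ₁ y ^ 2) =
      n ^ 2 * (n ^ 2 - m ^ 2) * φ₂ z ^ 2 * (φ₂ z ^ 2 - 1)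
        + m ^ 2 * (n ^ 2 - m ^ 2) * φ₂ z ^ 2 * φ₁ z ^ 2
        + m ^ 2 * φ₂ z ^ 2 * (deriv φ₁ z) ^ 2
        - 2 * m ^ 2 * φ₁ z * φ₂ z * deriv φ₁ z * deriv φ₂ z
        + (deriv φ₂ z) ^ 2 * ((n ^ 2 - m ^ 2) + m ^ 2 * φ₁ z ^ 2) := by
  set E : ℝ → ℝ := fun y =>
      n ^ 2 * (n ^ 2 - m ^ 2) * φ₂ y ^ 2 * (φ₂ y ^ 2 - 1)
        + m ^ 2 * (n ^ 2 - m ^ 2) * φ₂ y ^ 2 * φ₁ y ^ 2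
        + m ^ 2 * φ₂ y ^ 2 * (deriv φ₁ y) ^ 2
        - 2 * m ^ 2 * φ₁ y * φ₂ y * deriv φ₁ y * deriv φ₂ y
        + (deriv φ₂ y) ^ 2 * ((n ^ 2 - m ^ 2) + m ^ 2 * φ₁ y ^ 2) with hE
  have key : ∀ x : ℝ, HasDerivAt E 0 x := by
    intro x
    have h1 : HasDerivAt φ₁ (deriv φ₁ x) x := (hφ₁ x).hasDerivAt
    have h2 : HasDerivAt φ₂ (deriv φ₂ x) x := (hφ₂ x).hasDerivAt
    have h1' : HasDerivAt (deriv φ₁)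
        ((m ^ 2 - 2 * (m ^ 2 * φ₁ x ^ 2 + n ^ 2 * φ₂ x ^ 2)) * φ₁ x) x := by
      have := (hφ₁' x).hasDerivAt
      rwa [ode₁ x] at this
    have h2' : HasDerivAt (deriv φ₂)
        ((n ^ 2 - 2 * (m ^ 2 * φ₁ x ^ 2 + n ^ 2 * φ₂ x ^ 2)) * φ₂ x) x := by
      have := (hφ₂' x).hasDerivAt
      rwa [ode₂ x] at this
    have H := (((((((h2.pow 2).const_mul (n ^ 2 * (n ^ 2 - m ^ 2))).mul
          ((h2.pow 2).sub_const 1)).add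
        ((((h2.pow 2).const_mul (m ^ 2 * (n ^ 2 - m ^ 2))).mul (h1.pow 2)))).add
        (((h2.pow 2).const_mul (m ^ 2)).mul (h1'.pow 2))).sub
        (((((h1.const_mul (2 * m ^ 2)).mul h2).mul h1').mul h2'))).add
        (((h2'.pow 2).mul (((h1.pow 2).const_mul (m ^ 2)).const_add (n ^ 2 - m ^ 2)))))
    have hD : HasDerivAt E _ x := H
    exact hD.congr_deriv (by simp only [Pi.pow_apply, Pi.mul_apply]; ring)
  intro y z
  exact is_const_of_deriv_eq_zero (fun x => (key x).differentiableAt)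
    (fun x => (key x).deriv) y z
end

section
/- If (φ₀, φ₁, φ₂) solves the minimal-surface ODE system with the standard initial conditions, then for all y ∈ ℝ: φ₀(y)² + φ₁(y)² + φ₂(y)² = 1 and 2φ₁(y)² + (2n²/(n²+m²))φ₀(y)² = 1; that is, the solution curve lies on the intersection of the unit sphere and the cylinder 2φ₁² + (2n²/(n²+m²))φ₀² = 1. -/
open Set Real

private lemma gronwall_fwd (g g' D : ℝ → ℝ) (hd : ∀ t, HasDerivAt g (g' t) t)
    (hpos : ∀ t, 0 ≤ g t) (hD : Continuous D)
    (hb : ∀ t, |g' t| ≤ D t * g t) (h0 : g 0 = 0) :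
    ∀ b, 0 ≤ b → g b = 0 := by
  intro b hb0
  obtain ⟨M, hM⟩ := (isCompact_Icc (a := (0:ℝ)) (b := b)).exists_bound_of_continuousOn
    hD.continuousOn
  have key := norm_le_gronwallBound_of_norm_deriv_right_le (f := g) (f' := g')
    (a := 0) (b := b) (δ := 0) (K := M) (ε := 0)
    (fun t _ => (hd t).continuousAt.continuousWithinAt)
    (fun t _ => (hd t).hasDerivWithinAt)
    (by simp [h0])
    (fun t ht => by
      have h1 := hb t
      have h2 : D t ≤ M := le_trans (le_abs_self _)
        (by simpa using hM t (Ico_subset_Icc_self ht))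
      have h3 := mul_le_mul_of_nonneg_right h2 (hpos t)
      simp only [Real.norm_eq_abs, add_zero]
      rw [abs_of_nonneg (hpos t)]
      linarith)
    b (right_mem_Icc.2 hb0)
  rw [gronwallBound_ε0_δ0] at key
  simpa using key

private lemma gronwall_zero (g g' D : ℝ → ℝ) (hd : ∀ t, HasDerivAt g (g' t) t)
    (hpos : ∀ t, 0 ≤ g t) (hD : Continuous D)
    (hb : ∀ t, |g' t| ≤ D t * g t) (h0 : g 0 = 0) : ∀ t, g t = 0 := by
  intro t
  rcases le_or_gt 0 t with h | h
  · exact gronwall_fwd g g' D hd hpos hD hb h0 t h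
  · have := gronwall_fwd (fun s => g (-s)) (fun s => -g' (-s)) (fun s => D (-s))
      (fun s => by simpa [Function.comp_def] using ((hd (-s)).comp s (hasDerivAt_neg s)))
      (fun s => hpos _)
      (hD.comp continuous_neg)
      (fun s => by simpa using hb (-s))
      (by simpa using h0) (-t) (by linarith)
    simpa using this

private noncomputable def msQ (n m : ℝ) (φ₁ φ₂ : ℝ → ℝ) (y : ℝ) : ℝ :=
  m ^ 2 * φ₁ y ^ 2 + n ^ 2 * φ₂ y ^ 2

private noncomputable def msF (φ₀ φ₁ φ₂ : ℝ → ℝ) (y : ℝ) : ℝ :=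
  φ₀ y ^ 2 + φ₁ y ^ 2 + φ₂ y ^ 2 - 1

private noncomputable def msU (φ₀ φ₁ φ₂ : ℝ → ℝ) (y : ℝ) : ℝ :=
  φ₀ y * deriv φ₀ y + φ₁ y * deriv φ₁ y + φ₂ y * deriv φ₂ y

private noncomputable def msE (n m : ℝ) (φ₀ φ₁ φ₂ : ℝ → ℝ) (y : ℝ) : ℝ :=
  deriv φ₀ y ^ 2 + deriv φ₁ y ^ 2 + deriv φ₂ y ^ 2 - msQ n m φ₁ φ₂ y

private noncomputable def msG (n m : ℝ) (φ₀ φ₁ : ℝ → ℝ) (y : ℝ) : ℝ :=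
  2 * φ₁ y ^ 2 + 2 * n ^ 2 / (n ^ 2 + m ^ 2) * φ₀ y ^ 2 - 1

private noncomputable def msW (n m : ℝ) (φ₀ φ₁ : ℝ → ℝ) (y : ℝ) : ℝ :=
  4 * (φ₁ y * deriv φ₁ y) + 2 * (2 * n ^ 2 / (n ^ 2 + m ^ 2)) * (φ₀ y * deriv φ₀ y)

private noncomputable def msV (n m : ℝ) (φ₀ φ₁ φ₂ : ℝ → ℝ) (y : ℝ) : ℝ :=
  4 * deriv φ₁ y ^ 2 + 2 * (2 * n ^ 2 / (n ^ 2 + m ^ 2)) * deriv φ₀ y ^ 2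
    + 4 * m ^ 2 * φ₁ y ^ 2 - 4 * msQ n m φ₁ φ₂ y

private noncomputable def msH (n m : ℝ) (φ₀ φ₁ φ₂ : ℝ → ℝ) (y : ℝ) : ℝ :=
  msF φ₀ φ₁ φ₂ y ^ 2 + msU φ₀ φ₁ φ₂ y ^ 2 + msE n m φ₀ φ₁ φ₂ y ^ 2
    + msG n m φ₀ φ₁ y ^ 2 + msW n m φ₀ φ₁ y ^ 2 + msV n m φ₀ φ₁ φ₂ y ^ 2

private noncomputable def msHD (n m : ℝ) (φ₀ φ₁ φ₂ : ℝ → ℝ) (y : ℝ) : ℝ :=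
  2 * msF φ₀ φ₁ φ₂ y * (2 * msU φ₀ φ₁ φ₂ y)
    + 2 * msU φ₀ φ₁ φ₂ y * (msE n m φ₀ φ₁ φ₂ y - 2 * msQ n m φ₁ φ₂ y * msF φ₀ φ₁ φ₂ y)
    + 2 * msE n m φ₀ φ₁ φ₂ y * (-4 * msQ n m φ₁ φ₂ y * msU φ₀ φ₁ φ₂ y)
    + 2 * msG n m φ₀ φ₁ y * msW n m φ₀ φ₁ y
    + 2 * msW n m φ₀ φ₁ y * (msV n m φ₀ φ₁ φ₂ y - 4 * msQ n m φ₁ φ₂ y * msG n m φ₀ φ₁ y)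
    + 2 * msV n m φ₀ φ₁ φ₂ y *
        ((2 * (m ^ 2 + n ^ 2) - 4 * msQ n m φ₁ φ₂ y) * msW n m φ₀ φ₁ y
          - 8 * n ^ 2 * msU φ₀ φ₁ φ₂ y)

set_option maxHeartbeats 1000000 in
private lemma ms_bound (m2 n2 a b c d e f q : ℝ) (hm2 : 0 ≤ m2) (hn2 : 0 ≤ n2) :
    |2 * a * (2 * b) + 2 * b * (c - 2 * q * a) + 2 * c * (-4 * q * b)
      + 2 * d * e + 2 * e * (f - 4 * q * d)
      + 2 * f * ((2 * (m2 + n2) - 4 * q) * e - 8 * n2 * b)|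
    ≤ (5 + 2 * m2 + 10 * n2 + 14 * |q|) *
        (a ^ 2 + b ^ 2 + c ^ 2 + d ^ 2 + e ^ 2 + f ^ 2) := by
  have hA0 : 0 ≤ |q| := abs_nonneg q
  have hA1 : 0 ≤ |q| + q := by cases abs_cases q <;> linarith
  have hA2 : 0 ≤ |q| - q := by cases abs_cases q <;> linarith
  rw [abs_le]
  constructor <;>
  linarith [sq_nonneg a, sq_nonneg b, sq_nonneg c, sq_nonneg d, sq_nonneg e, sq_nonneg f,
    sq_nonneg (a - b), sq_nonneg (a + b), sq_nonneg (b - c), sq_nonneg (b + c),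
    sq_nonneg (d - e), sq_nonneg (d + e), sq_nonneg (e - f), sq_nonneg (e + f),
    sq_nonneg (b - f), sq_nonneg (b + f),
    mul_nonneg hA1 (sq_nonneg (a - b)), mul_nonneg hA1 (sq_nonneg (a + b)),
    mul_nonneg hA2 (sq_nonneg (a - b)), mul_nonneg hA2 (sq_nonneg (a + b)),
    mul_nonneg hA1 (sq_nonneg (b - c)), mul_nonneg hA1 (sq_nonneg (b + c)),
    mul_nonneg hA2 (sq_nonneg (b - c)), mul_nonneg hA2 (sq_nonneg (b + c)),
    mul_nonneg hA1 (sq_nonneg (d - e)), mul_nonneg hA1 (sq_nonneg (d + e)),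
    mul_nonneg hA2 (sq_nonneg (d - e)), mul_nonneg hA2 (sq_nonneg (d + e)),
    mul_nonneg hA1 (sq_nonneg (e - f)), mul_nonneg hA1 (sq_nonneg (e + f)),
    mul_nonneg hA2 (sq_nonneg (e - f)), mul_nonneg hA2 (sq_nonneg (e + f)),
    mul_nonneg hm2 (sq_nonneg (e - f)), mul_nonneg hm2 (sq_nonneg (e + f)),
    mul_nonneg hn2 (sq_nonneg (e - f)), mul_nonneg hn2 (sq_nonneg (e + f)),
    mul_nonneg hn2 (sq_nonneg (b - f)), mul_nonneg hn2 (sq_nonneg (b + f)),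
    mul_nonneg hA0 (sq_nonneg a), mul_nonneg hA0 (sq_nonneg b),
    mul_nonneg hA0 (sq_nonneg c), mul_nonneg hA0 (sq_nonneg d),
    mul_nonneg hA0 (sq_nonneg e), mul_nonneg hA0 (sq_nonneg f),
    mul_nonneg hm2 (sq_nonneg a), mul_nonneg hm2 (sq_nonneg b),
    mul_nonneg hm2 (sq_nonneg c), mul_nonneg hm2 (sq_nonneg d),
    mul_nonneg hm2 (sq_nonneg e), mul_nonneg hm2 (sq_nonneg f),
    mul_nonneg hn2 (sq_nonneg a), mul_nonneg hn2 (sq_nonneg b),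
    mul_nonneg hn2 (sq_nonneg c), mul_nonneg hn2 (sq_nonneg d),
    mul_nonneg hn2 (sq_nonneg e), mul_nonneg hn2 (sq_nonneg f)]

set_option maxHeartbeats 1000000 in
/-- A solution of the minimal-surface ODE system with the standard initial conditions lies on
the intersection of the unit sphere and the cylinder `2φ₁² + (2n²/(n²+m²))φ₀² = 1`. -/
theorem stmt_7 (n m : ℝ) (hm : 0 < m) (hmn : m < n) (φ₀ φ₁ φ₂ : ℝ → ℝ)
    (hφ₀ : Differentiable ℝ φ₀) (hφ₀' : Differentiable ℝ (deriv φ₀))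
    (hφ₁ : Differentiable ℝ φ₁) (hφ₁' : Differentiable ℝ (deriv φ₁))
    (hφ₂ : Differentiable ℝ φ₂) (hφ₂' : Differentiable ℝ (deriv φ₂))
    (ode₀ : ∀ y, deriv (deriv φ₀) y =
      -2 * (m ^ 2 * φ₁ y ^ 2 + n ^ 2 * φ₂ y ^ 2) * φ₀ y)
    (ode₁ : ∀ y, deriv (deriv φ₁) y =
      (m ^ 2 - 2 * (m ^ 2 * φ₁ y ^ 2 + n ^ 2 * φ₂ y ^ 2)) * φ₁ y)
    (ode₂ : ∀ y, deriv (deriv φ₂) y =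
      (n ^ 2 - 2 * (m ^ 2 * φ₁ y ^ 2 + n ^ 2 * φ₂ y ^ 2)) * φ₂ y)
    (init₀ : φ₀ 0 = Real.sqrt ((n ^ 2 + m ^ 2) / (2 * n ^ 2)))
    (init₁ : φ₁ 0 = 0)
    (init₂ : φ₂ 0 = Real.sqrt ((n ^ 2 - m ^ 2) / (2 * n ^ 2)))
    (init₀' : deriv φ₀ 0 = 0)
    (init₁' : deriv φ₁ 0 = Real.sqrt ((n ^ 2 - m ^ 2) / 2))
    (init₂' : deriv φ₂ 0 = 0) :
    ∀ y : ℝ, φ₀ y ^ 2 + φ₁ y ^ 2 + φ₂ y ^ 2 = 1 ∧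
      2 * φ₁ y ^ 2 + (2 * n ^ 2 / (n ^ 2 + m ^ 2)) * φ₀ y ^ 2 = 1 := by
  have hn : (0:ℝ) < n := hm.trans hmn
  have hmn2 : m ^ 2 < n ^ 2 := by nlinarith
  have hne : n ^ 2 + m ^ 2 ≠ 0 := by positivity
  have hn2 : n ^ 2 ≠ 0 := by positivity
  -- basic derivative facts
  have hd0 : ∀ y, HasDerivAt φ₀ (deriv φ₀ y) y := fun y => (hφ₀ y).hasDerivAt
  have hd1 : ∀ y, HasDerivAt φ₁ (deriv φ₁ y) y := fun y => (hφ₁ y).hasDerivAt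
  have hd2 : ∀ y, HasDerivAt φ₂ (deriv φ₂ y) y := fun y => (hφ₂ y).hasDerivAt
  have hdd0 : ∀ y, HasDerivAt (deriv φ₀)
      (-2 * (m ^ 2 * φ₁ y ^ 2 + n ^ 2 * φ₂ y ^ 2) * φ₀ y) y :=
    fun y => ode₀ y ▸ (hφ₀' y).hasDerivAt
  have hdd1 : ∀ y, HasDerivAt (deriv φ₁)
      ((m ^ 2 - 2 * (m ^ 2 * φ₁ y ^ 2 + n ^ 2 * φ₂ y ^ 2)) * φ₁ y) y :=
    fun y => ode₁ y ▸ (hφ₁' y).hasDerivAt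
  have hdd2 : ∀ y, HasDerivAt (deriv φ₂)
      ((n ^ 2 - 2 * (m ^ 2 * φ₁ y ^ 2 + n ^ 2 * φ₂ y ^ 2)) * φ₂ y) y :=
    fun y => ode₂ y ▸ (hφ₂' y).hasDerivAt
  -- derivatives of the six auxiliary quantities
  have hF : ∀ y, HasDerivAt (msF φ₀ φ₁ φ₂) (2 * msU φ₀ φ₁ φ₂ y) y := by
    intro y
    have h := ((((hd0 y).fun_pow 2).fun_add ((hd1 y).fun_pow 2)).fun_add ((hd2 y).fun_pow 2)).sub_const 1
    convert h using 1
    · rfl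
    · rfl
    · rfl
    simp only [msU]
    push_cast
    ring
  have hU : ∀ y, HasDerivAt (msU φ₀ φ₁ φ₂)
      (msE n m φ₀ φ₁ φ₂ y - 2 * msQ n m φ₁ φ₂ y * msF φ₀ φ₁ φ₂ y) y := by
    intro y
    have h := (((hd0 y).fun_mul (hdd0 y)).fun_add ((hd1 y).fun_mul (hdd1 y))).fun_add
      ((hd2 y).fun_mul (hdd2 y))
    convert h using 1
    · rfl
    · rfl
    · rfl
    simp only [msE, msQ, msF]
    ring
  have hE : ∀ y, HasDerivAt (msE n m φ₀ φ₁ φ₂)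
      (-4 * msQ n m φ₁ φ₂ y * msU φ₀ φ₁ φ₂ y) y := by
    intro y
    have h := ((((hdd0 y).fun_pow 2).fun_add ((hdd1 y).fun_pow 2)).fun_add ((hdd2 y).fun_pow 2)).fun_sub
      ((((hd1 y).fun_pow 2).const_mul (m ^ 2)).fun_add (((hd2 y).fun_pow 2).const_mul (n ^ 2)))
    convert h using 1
    · rfl
    · rfl
    · rfl
    simp only [msQ, msU]
    push_cast
    ring
  have hG : ∀ y, HasDerivAt (msG n m φ₀ φ₁) (msW n m φ₀ φ₁ y) y := by
    intro y
    have h := ((((hd1 y).fun_pow 2).const_mul 2).fun_add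
      (((hd0 y).fun_pow 2).const_mul (2 * n ^ 2 / (n ^ 2 + m ^ 2)))).sub_const 1
    convert h using 1
    · rfl
    · rfl
    · rfl
    simp only [msW]
    push_cast
    ring
  have hW : ∀ y, HasDerivAt (msW n m φ₀ φ₁)
      (msV n m φ₀ φ₁ φ₂ y - 4 * msQ n m φ₁ φ₂ y * msG n m φ₀ φ₁ y) y := by
    intro y
    have h := (((hd1 y).fun_mul (hdd1 y)).const_mul 4).fun_add
      (((hd0 y).fun_mul (hdd0 y)).const_mul (2 * (2 * n ^ 2 / (n ^ 2 + m ^ 2))))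
    convert h using 1
    · rfl
    · rfl
    · rfl
    simp only [msV, msQ, msG]
    ring
  have hV : ∀ y, HasDerivAt (msV n m φ₀ φ₁ φ₂)
      ((2 * (m ^ 2 + n ^ 2) - 4 * msQ n m φ₁ φ₂ y) * msW n m φ₀ φ₁ y
        - 8 * n ^ 2 * msU φ₀ φ₁ φ₂ y) y := by
    intro y
    have h := (((((hdd1 y).fun_pow 2).const_mul 4).fun_add
        (((hdd0 y).fun_pow 2).const_mul (2 * (2 * n ^ 2 / (n ^ 2 + m ^ 2))))).fun_add
        (((hd1 y).fun_pow 2).const_mul (4 * m ^ 2))).fun_sub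
      (((((hd1 y).fun_pow 2).const_mul (m ^ 2)).fun_add
        (((hd2 y).fun_pow 2).const_mul (n ^ 2))).const_mul 4)
    convert h using 1
    · rfl
    · rfl
    · rfl
    simp only [msW, msU, msQ]
    push_cast
    field_simp
    ring
  have hH : ∀ y, HasDerivAt (msH n m φ₀ φ₁ φ₂) (msHD n m φ₀ φ₁ φ₂ y) y := by
    intro y
    have h := (((((((hF y).fun_pow 2).fun_add ((hU y).fun_pow 2)).fun_add ((hE y).fun_pow 2)).fun_add
      ((hG y).fun_pow 2)).fun_add ((hW y).fun_pow 2)).fun_add ((hV y).fun_pow 2))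
    convert h using 1
    · rfl
    · rfl
    · rfl
    simp only [msHD]
    push_cast
    ring
  -- positivity and continuity
  have hpos : ∀ y, 0 ≤ msH n m φ₀ φ₁ φ₂ y := by
    intro y
    simp only [msH]
    positivity
  have hQc : Continuous (msQ n m φ₁ φ₂) :=
    (continuous_const.mul (hφ₁.continuous.pow 2)).add
      (continuous_const.mul (hφ₂.continuous.pow 2))
  have hCc : Continuous (fun y => 5 + 2 * m ^ 2 + 10 * n ^ 2
      + 14 * |msQ n m φ₁ φ₂ y|) :=
    continuous_const.add (continuous_const.mul hQc.abs)
  -- the derivative bound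
  have hbound : ∀ y, |msHD n m φ₀ φ₁ φ₂ y| ≤
      (5 + 2 * m ^ 2 + 10 * n ^ 2 + 14 * |msQ n m φ₁ φ₂ y|) * msH n m φ₀ φ₁ φ₂ y := by
    intro y
    have := ms_bound (m ^ 2) (n ^ 2) (msF φ₀ φ₁ φ₂ y) (msU φ₀ φ₁ φ₂ y)
      (msE n m φ₀ φ₁ φ₂ y) (msG n m φ₀ φ₁ y) (msW n m φ₀ φ₁ y) (msV n m φ₀ φ₁ φ₂ y)
      (msQ n m φ₁ φ₂ y) (sq_nonneg m) (sq_nonneg n)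
    simpa only [msHD, msH] using this
  -- initial values
  have hsq1 : Real.sqrt ((n ^ 2 + m ^ 2) / (2 * n ^ 2)) ^ 2 = (n ^ 2 + m ^ 2) / (2 * n ^ 2) :=
    Real.sq_sqrt (by positivity)
  have hsq2 : Real.sqrt ((n ^ 2 - m ^ 2) / (2 * n ^ 2)) ^ 2 = (n ^ 2 - m ^ 2) / (2 * n ^ 2) :=
    Real.sq_sqrt (div_nonneg (by nlinarith) (by positivity))
  have hsq3 : Real.sqrt ((n ^ 2 - m ^ 2) / 2) ^ 2 = (n ^ 2 - m ^ 2) / 2 :=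
    Real.sq_sqrt (div_nonneg (by nlinarith) (by norm_num))
  have hF0 : msF φ₀ φ₁ φ₂ 0 = 0 := by
    simp only [msF]
    rw [init₀, init₁, init₂, hsq1, hsq2]
    field_simp
    ring
  have hU0 : msU φ₀ φ₁ φ₂ 0 = 0 := by
    simp [msU, init₀', init₁, init₂']
  have hE0 : msE n m φ₀ φ₁ φ₂ 0 = 0 := by
    simp only [msE, msQ]
    rw [init₀', init₁', init₂', init₁, init₂, hsq3, hsq2]
    field_simp
    ring
  have hG0 : msG n m φ₀ φ₁ 0 = 0 := by
    simp only [msG]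
    rw [init₁, init₀, hsq1]
    field_simp
    ring
  have hW0 : msW n m φ₀ φ₁ 0 = 0 := by
    simp [msW, init₁, init₀']
  have hV0 : msV n m φ₀ φ₁ φ₂ 0 = 0 := by
    simp only [msV, msQ]
    rw [init₁', init₀', init₁, init₂, hsq3, hsq2]
    field_simp
    ring
  have hH0 : msH n m φ₀ φ₁ φ₂ 0 = 0 := by
    simp [msH, hF0, hU0, hE0, hG0, hW0, hV0]
  -- Gronwall
  have hzero := gronwall_zero (msH n m φ₀ φ₁ φ₂) (msHD n m φ₀ φ₁ φ₂)
    (fun y => 5 + 2 * m ^ 2 + 10 * n ^ 2 + 14 * |msQ n m φ₁ φ₂ y|)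
    hH hpos hCc hbound hH0
  -- conclusion
  intro y
  have h := hzero y
  simp only [msH] at h
  have hF' : msF φ₀ φ₁ φ₂ y = 0 := by
    have h2 : msF φ₀ φ₁ φ₂ y ^ 2 = 0 := by
      linarith [sq_nonneg (msU φ₀ φ₁ φ₂ y), sq_nonneg (msE n m φ₀ φ₁ φ₂ y),
        sq_nonneg (msG n m φ₀ φ₁ y), sq_nonneg (msW n m φ₀ φ₁ y),
        sq_nonneg (msV n m φ₀ φ₁ φ₂ y), sq_nonneg (msF φ₀ φ₁ φ₂ y)]
    exact pow_eq_zero_iff (by norm_num) |>.mp h2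
  have hG' : msG n m φ₀ φ₁ y = 0 := by
    have h2 : msG n m φ₀ φ₁ y ^ 2 = 0 := by
      linarith [sq_nonneg (msU φ₀ φ₁ φ₂ y), sq_nonneg (msE n m φ₀ φ₁ φ₂ y),
        sq_nonneg (msG n m φ₀ φ₁ y), sq_nonneg (msW n m φ₀ φ₁ y),
        sq_nonneg (msV n m φ₀ φ₁ φ₂ y), sq_nonneg (msF φ₀ φ₁ φ₂ y)]
    exact pow_eq_zero_iff (by norm_num) |>.mp h2
  simp only [msF] at hF'
  simp only [msG] at hG'
  constructor
  · linarith
  · linarith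
end

section
/- Define φ₀(y) = sqrt((n²+m²)/(2n²))·cos(θ(y)), φ₁(y) = (1/√2)·sin(θ(y)), and φ₂(y) = sqrt(n² − m²cos²(θ(y)))/(√2·n). Then (φ₀, φ₁, φ₂) solves the minimal-surface ODE system and satisfies the standard initial conditions. -/
/-- The explicit functions built from the pendulum-type solution `θ` solve the
minimal-surface ODE system and satisfy the standard initial conditions. -/
theorem stmt_8 (n m : ℝ) (hm : 0 < m) (hmn : m < n) (θ : ℝ → ℝ)
    (hθ0 : θ 0 = 0) (hθdiff : Differentiable ℝ θ)
    (hθ' : ∀ y, deriv θ y = Real.sqrt (n ^ 2 - m ^ 2 * Real.cos (θ y) ^ 2))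
    (φ₀ φ₁ φ₂ : ℝ → ℝ)
    (hφ₀ : φ₀ = fun y => Real.sqrt ((n ^ 2 + m ^ 2) / (2 * n ^ 2)) * Real.cos (θ y))
    (hφ₁ : φ₁ = fun y => (1 / Real.sqrt 2) * Real.sin (θ y))
    (hφ₂ : φ₂ = fun y =>
      Real.sqrt (n ^ 2 - m ^ 2 * Real.cos (θ y) ^ 2) / (Real.sqrt 2 * n)) :
    (∀ y, deriv (deriv φ₀) y = -2 * (m ^ 2 * φ₁ y ^ 2 + n ^ 2 * φ₂ y ^ 2) * φ₀ y) ∧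
    (∀ y, deriv (deriv φ₁) y =
      (m ^ 2 - 2 * (m ^ 2 * φ₁ y ^ 2 + n ^ 2 * φ₂ y ^ 2)) * φ₁ y) ∧
    (∀ y, deriv (deriv φ₂) y =
      (n ^ 2 - 2 * (m ^ 2 * φ₁ y ^ 2 + n ^ 2 * φ₂ y ^ 2)) * φ₂ y) ∧
    φ₀ 0 = Real.sqrt ((n ^ 2 + m ^ 2) / (2 * n ^ 2)) ∧
    φ₁ 0 = 0 ∧
    φ₂ 0 = Real.sqrt ((n ^ 2 - m ^ 2) / (2 * n ^ 2)) ∧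
    deriv φ₀ 0 = 0 ∧
    deriv φ₁ 0 = Real.sqrt ((n ^ 2 - m ^ 2) / 2) ∧
    deriv φ₂ 0 = 0 := by
  have hn : 0 < n := hm.trans hmn
  have hn0 : n ≠ 0 := ne_of_gt hn
  have hs2 : (0:ℝ) < Real.sqrt 2 := Real.sqrt_pos.2 two_pos
  have hs2sq : Real.sqrt 2 ^ 2 = 2 := Real.sq_sqrt (by norm_num)
  set g : ℝ → ℝ := fun y => n ^ 2 - m ^ 2 * Real.cos (θ y) ^ 2 with hg
  have hgpos : ∀ y, 0 < g y := by
    intro y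
    have h1 : Real.cos (θ y) ^ 2 ≤ 1 := Real.cos_sq_le_one (θ y)
    simp only [hg]
    nlinarith [sq_nonneg m]
  have hgnn : ∀ y, (0:ℝ) ≤ g y := fun y => (hgpos y).le
  have hsqrtg : ∀ y, Real.sqrt (g y) * Real.sqrt (g y) = g y :=
    fun y => Real.mul_self_sqrt (hgnn y)
  have hφ₂g : ∀ y, φ₂ y = Real.sqrt (g y) / (Real.sqrt 2 * n) := fun y => by
    rw [hφ₂]
  have hθd : ∀ y, HasDerivAt θ (Real.sqrt (g y)) y := by
    intro y
    have := (hθdiff y).hasDerivAt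
    rwa [hθ' y] at this
  have hcosd : ∀ y, HasDerivAt (fun y => Real.cos (θ y))
      (-Real.sin (θ y) * Real.sqrt (g y)) y :=
    fun y => (Real.hasDerivAt_cos (θ y)).comp y (hθd y)
  have hsind : ∀ y, HasDerivAt (fun y => Real.sin (θ y))
      (Real.cos (θ y) * Real.sqrt (g y)) y :=
    fun y => (Real.hasDerivAt_sin (θ y)).comp y (hθd y)
  have hgd : ∀ y, HasDerivAt g
      (2 * m ^ 2 * Real.cos (θ y) * Real.sin (θ y) * Real.sqrt (g y)) y := by
    intro y
    have h1 : HasDerivAt (fun y => Real.cos (θ y) ^ 2)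
        ((2 : ℕ) * Real.cos (θ y) ^ 1 * (-Real.sin (θ y) * Real.sqrt (g y))) y :=
      (hcosd y).pow 2
    have h2 := (hasDerivAt_const y (n ^ 2)).sub (h1.const_mul (m ^ 2))
    refine h2.congr_deriv ?_
    push_cast
    ring
  have hsd : ∀ y, HasDerivAt (fun y => Real.sqrt (g y))
      (m ^ 2 * Real.cos (θ y) * Real.sin (θ y)) y := by
    intro y
    have h := (hgd y).sqrt (ne_of_gt (hgpos y))
    convert h using 1
    have hs : Real.sqrt (g y) ≠ 0 := ne_of_gt (Real.sqrt_pos.2 (hgpos y))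
    field_simp
  -- sum of squares
  have hsum : ∀ y, m ^ 2 * φ₁ y ^ 2 + n ^ 2 * φ₂ y ^ 2
      = (m ^ 2 * Real.sin (θ y) ^ 2 + g y) / 2 := by
    intro y
    rw [hφ₁, hφ₂g y]
    simp only
    have e2 : Real.sqrt (g y) ^ 2 = g y := Real.sq_sqrt (hgnn y)
    rw [mul_pow, div_pow, div_pow, one_pow, mul_pow, e2, hs2sq]
    field_simp
  -- first derivatives
  have hφ₀d : ∀ y, HasDerivAt φ₀
      (Real.sqrt ((n ^ 2 + m ^ 2) / (2 * n ^ 2)) * (-Real.sin (θ y) * Real.sqrt (g y))) y := by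
    intro y; rw [hφ₀]; exact (hcosd y).const_mul _
  have hφ₁d : ∀ y, HasDerivAt φ₁
      ((1 / Real.sqrt 2) * (Real.cos (θ y) * Real.sqrt (g y))) y := by
    intro y; rw [hφ₁]; exact (hsind y).const_mul _
  have hφ₂d : ∀ y, HasDerivAt φ₂
      ((m ^ 2 * Real.cos (θ y) * Real.sin (θ y)) / (Real.sqrt 2 * n)) y := by
    intro y
    have : φ₂ = fun y => Real.sqrt (g y) / (Real.sqrt 2 * n) := funext hφ₂g
    rw [this]
    exact (hsd y).div_const _
  have hdφ₀ : deriv φ₀ = fun y =>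
      Real.sqrt ((n ^ 2 + m ^ 2) / (2 * n ^ 2)) * (-Real.sin (θ y) * Real.sqrt (g y)) :=
    funext fun y => (hφ₀d y).deriv
  have hdφ₁ : deriv φ₁ = fun y =>
      (1 / Real.sqrt 2) * (Real.cos (θ y) * Real.sqrt (g y)) :=
    funext fun y => (hφ₁d y).deriv
  have hdφ₂ : deriv φ₂ = fun y =>
      (m ^ 2 * Real.cos (θ y) * Real.sin (θ y)) / (Real.sqrt 2 * n) :=
    funext fun y => (hφ₂d y).deriv
  refine ⟨?_, ?_, ?_, ?_, ?_, ?_, ?_, ?_, ?_⟩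
  · -- φ₀''
    intro y
    rw [hdφ₀]
    have h : HasDerivAt (fun y =>
        Real.sqrt ((n ^ 2 + m ^ 2) / (2 * n ^ 2)) * (-Real.sin (θ y) * Real.sqrt (g y)))
        (Real.sqrt ((n ^ 2 + m ^ 2) / (2 * n ^ 2)) *
          ((-(Real.cos (θ y) * Real.sqrt (g y))) * Real.sqrt (g y) +
            (-Real.sin (θ y)) * (m ^ 2 * Real.cos (θ y) * Real.sin (θ y)))) y :=
      (((hsind y).neg.mul (hsd y))).const_mul _
    rw [h.deriv, hsum y, hφ₀]
    simp only
    linear_combination (-(Real.sqrt ((n ^ 2 + m ^ 2) / (2 * n ^ 2)) * Real.cos (θ y))) *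
      hsqrtg y
  · -- φ₁''
    intro y
    rw [hdφ₁]
    have h : HasDerivAt (fun y => (1 / Real.sqrt 2) * (Real.cos (θ y) * Real.sqrt (g y)))
        ((1 / Real.sqrt 2) *
          ((-Real.sin (θ y) * Real.sqrt (g y)) * Real.sqrt (g y) +
            Real.cos (θ y) * (m ^ 2 * Real.cos (θ y) * Real.sin (θ y)))) y :=
      ((hcosd y).mul (hsd y)).const_mul _
    rw [h.deriv, hsum y, hφ₁]
    simp only
    linear_combination (-((1 / Real.sqrt 2) * Real.sin (θ y))) * hsqrtg y +
      ((1 / Real.sqrt 2) * m ^ 2 * Real.sin (θ y)) * Real.sin_sq_add_cos_sq (θ y)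
  · -- φ₂''
    intro y
    rw [hdφ₂]
    have h : HasDerivAt
        (fun y => (m ^ 2 * Real.cos (θ y) * Real.sin (θ y)) / (Real.sqrt 2 * n))
        ((m ^ 2 * (-Real.sin (θ y) * Real.sqrt (g y)) * Real.sin (θ y) +
          m ^ 2 * Real.cos (θ y) * (Real.cos (θ y) * Real.sqrt (g y))) / (Real.sqrt 2 * n)) y := by
      have h1 : HasDerivAt (fun y => m ^ 2 * Real.cos (θ y) * Real.sin (θ y))
          (m ^ 2 * (-Real.sin (θ y) * Real.sqrt (g y)) * Real.sin (θ y) +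
            m ^ 2 * Real.cos (θ y) * (Real.cos (θ y) * Real.sqrt (g y))) y := by
        have := (((hcosd y).const_mul (m ^ 2)).mul (hsind y))
        exact this
      exact h1.div_const _
    rw [h.deriv, hsum y, hφ₂g y]
    simp only [hg]
    field_simp
    ring
  · rw [hφ₀]; simp [hθ0]
  · rw [hφ₁]; simp [hθ0]
  · rw [hφ₂]
    simp only [hθ0, Real.cos_zero, one_pow, mul_one]
    rw [Real.sqrt_div (by nlinarith : (0:ℝ) ≤ n ^ 2 - m ^ 2),
      Real.sqrt_mul (by norm_num : (0:ℝ) ≤ 2), Real.sqrt_sq hn.le]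
  · rw [hdφ₀]; simp [hθ0]
  · rw [hdφ₁]
    simp only [hg, hθ0, Real.cos_zero, Real.sin_zero, one_pow, mul_one, one_mul]
    rw [Real.sqrt_div (by nlinarith : (0:ℝ) ≤ n ^ 2 - m ^ 2)]
    ring
  · rw [hdφ₂]; simp [hθ0]
end

section
/- Let a = ∫₀^{2π} dt / sqrt(n² − m²cos²(t)). Then θ(y + a) = θ(y) + 2π for all y ∈ ℝ. (Consequently cos∘θ and sin∘θ, and hence the associated solution (φ₀, φ₁, φ₂), are periodic with period a.) -/
open Real

/-- The angle function `θ` is quasi-periodic: `θ(y + a) = θ(y) + 2π`, where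
`a = ∫₀^{2π} dt / sqrt(n² − m²cos²t)`. -/
theorem stmt_9 (n m : ℝ) (hm : 0 < m) (hmn : m < n) (θ : ℝ → ℝ)
    (hθ0 : θ 0 = 0) (hθdiff : Differentiable ℝ θ)
    (hθ' : ∀ y, deriv θ y = Real.sqrt (n ^ 2 - m ^ 2 * Real.cos (θ y) ^ 2))
    (a : ℝ) (ha : a = ∫ t in (0:ℝ)..(2 * π), 1 / Real.sqrt (n ^ 2 - m ^ 2 * Real.cos t ^ 2)) :
    ∀ y : ℝ, θ (y + a) = θ y + 2 * π := by
  intro y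
  set f : ℝ → ℝ := fun x => Real.sqrt (n ^ 2 - m ^ 2 * Real.cos x ^ 2) with hf
  have hpos : ∀ x, 0 < n ^ 2 - m ^ 2 * Real.cos x ^ 2 := by
    intro x
    have h1 : m ^ 2 * Real.cos x ^ 2 ≤ m ^ 2 := by
      nlinarith [Real.cos_sq_le_one x, sq_nonneg m]
    nlinarith
  have hfpos : ∀ x, 0 < f x := fun x => Real.sqrt_pos.mpr (hpos x)
  have hfcont : Continuous f := by
    apply Real.continuous_sqrt.comp
    continuity
  have hgcont : Continuous (fun x => 1 / f x) :=
    continuous_const.div hfcont (fun x => (hfpos x).ne')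
  set G : ℝ → ℝ := fun x => ∫ t in (0:ℝ)..x, 1 / f t with hG
  have hGderiv : ∀ x, HasDerivAt G (1 / f x) x := by
    intro x
    exact intervalIntegral.integral_hasDerivAt_right
      (hgcont.intervalIntegrable _ _)
      (hgcont.stronglyMeasurableAtFilter _ _)
      hgcont.continuousAt
  have hGmono : StrictMono G := by
    apply strictMono_of_deriv_pos
    intro x
    rw [(hGderiv x).deriv]
    exact one_div_pos.mpr (hfpos x)
  have hθder : ∀ z, HasDerivAt θ (f (θ z)) z := by
    intro z
    have h := (hθdiff z).hasDerivAt
    rwa [hθ' z] at h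
  have hHderiv : ∀ z, HasDerivAt (fun z => G (θ z) - z) 0 z := by
    intro z
    have h1 := ((hGderiv (θ z)).comp z (hθder z)).sub (hasDerivAt_id z)
    have h2 : 1 / f (θ z) * f (θ z) - 1 = 0 := by
      rw [one_div_mul_cancel (hfpos (θ z)).ne', sub_self]
    rw [h2] at h1
    exact h1
  have hHy : ∀ z, G (θ z) = z := by
    intro z
    have hc := is_const_of_deriv_eq_zero (f := fun z => G (θ z) - z)
      (fun w => (hHderiv w).differentiableAt)
      (fun w => (hHderiv w).deriv) z 0
    have hG0 : G 0 = 0 := by simp [hG]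
    rw [hθ0] at hc
    simp [hG0] at hc
    linarith
  have hper : Function.Periodic (fun x => 1 / f x) (2 * π) := by
    intro x
    simp [hf, Real.cos_add_two_pi]
  have hkey : G (θ y + 2 * π) = G (θ y) + a := by
    have hadj := intervalIntegral.integral_add_adjacent_intervals
      (a := (0:ℝ)) (b := θ y) (c := θ y + 2 * π) (μ := MeasureTheory.volume)
      (hgcont.intervalIntegrable _ _) (hgcont.intervalIntegrable _ _)
    have hshift := hper.intervalIntegral_add_eq (θ y) 0
    rw [zero_add] at hshift
    have ha' : (∫ t in (θ y)..(θ y + 2 * π), 1 / f t) = a := by rw [hshift, ha]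
    calc G (θ y + 2 * π) = (∫ t in (0:ℝ)..(θ y), 1 / f t) + ∫ t in (θ y)..(θ y + 2 * π), 1 / f t := hadj.symm
      _ = G (θ y) + a := by rw [ha']
  apply hGmono.injective
  rw [hHy (y + a), hkey, hHy y]
end

section
/- There exists a not-identically-zero solution z of the Hill equation z'' + q z = 0 satisfying z(y + 2b) = z(y) for all y if and only if (z₁(b) + z₂'(b))² = 4. -/
open Set

lemma hill_uniq (q : ℝ → ℝ) (C : ℝ) (hC : ∀ t, |q t| ≤ C)
    {z : ℝ → ℝ} (hz : Differentiable ℝ z) (hz' : Differentiable ℝ (deriv z))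
    (ode : ∀ y, deriv (deriv z) y + q y * z y = 0)
    (h0 : z 0 = 0) (h0' : deriv z 0 = 0) :
    ∀ y, z y = 0 := by
  have hC0 : 0 ≤ C := le_trans (abs_nonneg _) (hC 0)
  set K : NNReal := ⟨max 1 C, le_trans zero_le_one (le_max_left _ _)⟩ with hK
  set v : ℝ → ℝ × ℝ → ℝ × ℝ := fun t p => (p.2, -q t * p.1) with hv_def
  have hv : ∀ t, LipschitzWith K (v t) := by
    intro t
    apply LipschitzWith.of_dist_le_mul
    intro p p'
    simp only [hv_def, Prod.dist_eq, Real.dist_eq]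
    rw [max_le_iff]
    constructor
    · calc |p.2 - p'.2| ≤ 1 * max |p.1 - p'.1| |p.2 - p'.2| := by
            rw [one_mul]; exact le_max_right _ _
        _ ≤ (K : ℝ) * max |p.1 - p'.1| |p.2 - p'.2| := by
            apply mul_le_mul_of_nonneg_right _ (le_max_of_le_left (abs_nonneg _))
            exact le_max_left 1 C
    · have : -q t * p.1 - -q t * p'.1 = -q t * (p.1 - p'.1) := by ring
      rw [this, abs_mul, abs_neg]
      calc |q t| * |p.1 - p'.1| ≤ C * max |p.1 - p'.1| |p.2 - p'.2| :=
            mul_le_mul (hC t) (le_max_left _ _) (abs_nonneg _) hC0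
        _ ≤ (K : ℝ) * max |p.1 - p'.1| |p.2 - p'.2| := by
            apply mul_le_mul_of_nonneg_right _ (le_max_of_le_left (abs_nonneg _))
            exact le_max_right 1 C
  set f : ℝ → ℝ × ℝ := fun t => (z t, deriv z t) with hf_def
  have hf' : ∀ t, HasDerivAt f (v t (f t)) t := by
    intro t
    have h1 : HasDerivAt z (deriv z t) t := (hz t).hasDerivAt
    have h2 : HasDerivAt (deriv z) (deriv (deriv z) t) t := (hz' t).hasDerivAt
    have h3 : deriv (deriv z) t = -q t * z t := by have := ode t; linarith
    rw [h3] at h2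
    exact h1.prodMk h2
  intro y
  have key : f y = (fun _ : ℝ => ((0 : ℝ), (0 : ℝ))) y := by
    have hay := abs_nonneg y
    have hmem : (0 : ℝ) ∈ Ioo (-(|y| + 1)) (|y| + 1) := by
      constructor <;> [linarith; linarith]
    have hmemy : y ∈ Ioo (-(|y| + 1)) (|y| + 1) := by
      constructor
      · have := neg_abs_le y; linarith
      · have := le_abs_self y; linarith
    have heq : f 0 = ((0 : ℝ), (0 : ℝ)) := by simp [hf_def, h0, h0']
    have hg : ∀ t ∈ Ioo (-(|y| + 1)) (|y| + 1),
        HasDerivAt (fun _ : ℝ => ((0 : ℝ), (0 : ℝ))) (v t ((0 : ℝ), (0 : ℝ))) t ∧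
          ((0 : ℝ), (0 : ℝ)) ∈ (univ : Set (ℝ × ℝ)) := by
      intro t _
      refine ⟨?_, trivial⟩
      have h4 : v t ((0 : ℝ), (0 : ℝ)) = (0, 0) := by simp [hv_def]
      rw [h4]
      exact hasDerivAt_const t _
    exact ODE_solution_unique_of_mem_Ioo (s := fun _ => univ)
      (fun t _ => (hv t).lipschitzOnWith) hmem
      (fun t _ => ⟨hf' t, trivial⟩) hg heq hmemy
  have := congrArg Prod.fst key
  simpa [hf_def] using this

/-- The Hill equation has a nonzero solution of period `2b` iff the discriminant
`(z₁(b) + z₂'(b))² = 4`. -/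
theorem stmt_12 (b : ℝ) (hb : 0 < b) (q : ℝ → ℝ) (hq : Continuous q)
    (hqper : ∀ y, q (y + b) = q y)
    (z₁ z₂ : ℝ → ℝ)
    (hz₁ : Differentiable ℝ z₁) (hz₁' : Differentiable ℝ (deriv z₁))
    (hz₂ : Differentiable ℝ z₂) (hz₂' : Differentiable ℝ (deriv z₂))
    (ode₁ : ∀ y, deriv (deriv z₁) y + q y * z₁ y = 0)
    (ode₂ : ∀ y, deriv (deriv z₂) y + q y * z₂ y = 0)
    (init₁ : z₁ 0 = 1) (init₁' : deriv z₁ 0 = 0)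
    (init₂ : z₂ 0 = 0) (init₂' : deriv z₂ 0 = 1)
    :
    (∃ z : ℝ → ℝ, Differentiable ℝ z ∧ Differentiable ℝ (deriv z) ∧
        (∀ y, deriv (deriv z) y + q y * z y = 0) ∧ z ≠ 0 ∧
        (∀ y, z (y + 2 * b) = z y)) ↔
      (z₁ b + deriv z₂ b) ^ 2 = 4 := by
  -- q is globally bounded
  have hper : Function.Periodic q b := hqper
  obtain ⟨Cq, hCb⟩ := (isCompact_Icc (a := (0:ℝ)) (b := b)).exists_bound_of_continuousOn
    hq.continuousOn
  have hC : ∀ t, |q t| ≤ Cq := by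
    intro t
    obtain ⟨s, hs, hqs⟩ := hper.exists_mem_Ico₀ hb t
    rw [hqs]
    simpa [Real.norm_eq_abs] using hCb s (Set.Ico_subset_Icc_self hs)
  -- linear combinations of z₁, z₂
  have comboD : ∀ α β : ℝ, Differentiable ℝ (fun y => α * z₁ y + β * z₂ y) :=
    fun α β => (hz₁.const_mul α).add (hz₂.const_mul β)
  have comboDeriv : ∀ α β : ℝ,
      deriv (fun y => α * z₁ y + β * z₂ y) = fun y => α * deriv z₁ y + β * deriv z₂ y := by
    intro α β
    funext y
    rw [deriv_fun_add ((hz₁ y).const_mul α) ((hz₂ y).const_mul β),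
      deriv_const_mul α (hz₁ y), deriv_const_mul β (hz₂ y)]
  have comboD' : ∀ α β : ℝ, Differentiable ℝ (deriv (fun y => α * z₁ y + β * z₂ y)) := by
    intro α β
    rw [comboDeriv]
    exact (hz₁'.const_mul α).add (hz₂'.const_mul β)
  have comboSol : ∀ α β : ℝ, ∀ y,
      deriv (deriv (fun y => α * z₁ y + β * z₂ y)) y + q y * (α * z₁ y + β * z₂ y) = 0 := by
    intro α β y
    rw [comboDeriv]
    rw [deriv_fun_add ((hz₁' y).const_mul α) ((hz₂' y).const_mul β),
      deriv_const_mul α (hz₁' y), deriv_const_mul β (hz₂' y)]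
    linear_combination α * ode₁ y + β * ode₂ y
  -- every solution is a combination of z₁, z₂
  have rep : ∀ z : ℝ → ℝ, Differentiable ℝ z → Differentiable ℝ (deriv z) →
      (∀ y, deriv (deriv z) y + q y * z y = 0) →
      (∀ y, z y = z 0 * z₁ y + deriv z 0 * z₂ y) ∧
      (∀ y, deriv z y = z 0 * deriv z₁ y + deriv z 0 * deriv z₂ y) := by
    intro z hz hz' odez
    set w : ℝ → ℝ := fun y => z 0 * z₁ y + deriv z 0 * z₂ y with hw_def
    have hwD : Differentiable ℝ w := comboD _ _
    set d : ℝ → ℝ := fun y => z y - w y with hd_def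
    have hdD : Differentiable ℝ d := hz.sub hwD
    have hdDeriv : deriv d = fun y => deriv z y - deriv w y := by
      funext y
      exact deriv_sub (hz y) (hwD y)
    have hdD' : Differentiable ℝ (deriv d) := by
      rw [hdDeriv]
      exact hz'.sub (comboD' _ _)
    have oded : ∀ y, deriv (deriv d) y + q y * d y = 0 := by
      intro y
      rw [hdDeriv]
      rw [deriv_fun_sub (hz' y) ((comboD' _ _) y)]
      have h1 := odez y
      have h2 := comboSol (z 0) (deriv z 0) y
      simp only [hd_def, hw_def]
      linarith
    have hd0 : d 0 = 0 := by
      simp [hd_def, hw_def, init₁, init₂]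
    have hd0' : deriv d 0 = 0 := by
      rw [hdDeriv]
      simp only [hw_def, comboDeriv]
      simp [init₁', init₂']
    have hzero := hill_uniq q Cq hC hdD hdD' oded hd0 hd0'
    have heq : ∀ y, z y = z 0 * z₁ y + deriv z 0 * z₂ y := by
      intro y
      have := hzero y
      simp only [hd_def, hw_def] at this
      linarith
    refine ⟨heq, ?_⟩
    intro y
    have hzw : z = w := funext fun y => heq y
    rw [hzw, hw_def, comboDeriv]
    simp [init₁, init₂, init₁', init₂']
  -- translation by b of a solution
  have shift : ∀ z : ℝ → ℝ, Differentiable ℝ z → Differentiable ℝ (deriv z) →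
      (∀ y, deriv (deriv z) y + q y * z y = 0) →
      (∀ y, z (y + b) = z b * z₁ y + deriv z b * z₂ y) ∧
      (∀ y, deriv z (y + b) = z b * deriv z₁ y + deriv z b * deriv z₂ y) := by
    intro z hz hz' odez
    set w : ℝ → ℝ := fun y => z (y + b) with hw_def
    have hwD : Differentiable ℝ w := hz.comp (differentiable_id.add_const b)
    have hwDeriv : deriv w = fun y => deriv z (y + b) := by
      funext y
      exact deriv_comp_add_const z b y
    have hwD' : Differentiable ℝ (deriv w) := by
      rw [hwDeriv]
      exact hz'.comp (differentiable_id.add_const b)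
    have odew : ∀ y, deriv (deriv w) y + q y * w y = 0 := by
      intro y
      rw [hwDeriv]
      have h1 : deriv (fun y => deriv z (y + b)) y = deriv (deriv z) (y + b) :=
        deriv_comp_add_const (deriv z) b y
      rw [h1]
      have := odez (y + b)
      rw [hqper y] at this
      exact this
    obtain ⟨h1, h2⟩ := rep w hwD hwD' odew
    have hw0 : w 0 = z b := by simp [hw_def]
    have hw0' : deriv w 0 = deriv z b := by rw [hwDeriv]; simp
    constructor
    · intro y
      have := h1 y
      rwa [hw0, hw0'] at this
    · intro y
      have := h2 y
      rw [hw0, hw0'] at this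
      rw [← this, hwDeriv]
  -- the Wronskian is 1
  have hW : z₁ b * deriv z₂ b - z₂ b * deriv z₁ b = 1 := by
    set W : ℝ → ℝ := fun y => z₁ y * deriv z₂ y - z₂ y * deriv z₁ y with hW_def
    have hWD : Differentiable ℝ W := (hz₁.mul hz₂').sub (hz₂.mul hz₁')
    have hWd : ∀ y, deriv W y = 0 := by
      intro y
      have h := (((hz₁ y).hasDerivAt.mul (hz₂' y).hasDerivAt).sub
        ((hz₂ y).hasDerivAt.mul (hz₁' y).hasDerivAt))
      rw [show deriv W y = _ from h.deriv]
      linear_combination z₁ y * ode₂ y - z₂ y * ode₁ y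
    have hconst : W b = W 0 := is_const_of_deriv_eq_zero hWD hWd b 0
    simp only [hW_def, init₁, init₁', init₂, init₂'] at hconst
    linarith [hconst]
  set A := z₁ b with hA
  set B := z₂ b with hB
  set Cc := deriv z₁ b with hCc
  set D := deriv z₂ b with hD
  obtain ⟨hs1, hs1'⟩ := shift z₁ hz₁ hz₁' ode₁
  obtain ⟨hs2, hs2'⟩ := shift z₂ hz₂ hz₂' ode₂
  constructor
  · rintro ⟨z, hz, hz', odez, hzne, hzper⟩
    obtain ⟨hrep, hrep'⟩ := rep z hz hz' odez
    obtain ⟨hsh, hsh'⟩ := shift z hz hz' odez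
    set α := z 0 with hα_def
    set β := deriv z 0 with hβ_def
    have hαβ : ¬(α = 0 ∧ β = 0) := by
      rintro ⟨h1, h2⟩
      exact hzne (funext (hill_uniq q Cq hC hz hz' odez h1 h2))
    have key : (fun y => (z b * A + deriv z b * B) * z₁ y + (z b * Cc + deriv z b * D) * z₂ y)
        = fun y => α * z₁ y + β * z₂ y := by
      funext y
      have h1 : z (y + 2 * b) = z y := hzper y
      rw [show y + 2 * b = (y + b) + b by ring] at h1
      rw [hsh (y + b), hs1 y, hs2 y, hrep y] at h1
      linear_combination h1
    have e1 : z b * A + deriv z b * B = α := by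
      have := congrFun key 0
      simpa [init₁, init₂] using this
    have e2 : z b * Cc + deriv z b * D = β := by
      have h := congrArg deriv key
      rw [comboDeriv, comboDeriv] at h
      have := congrFun h 0
      simpa [init₁', init₂'] using this
    have hzb : z b = α * A + β * B := hrep b
    have hzb' : deriv z b = α * Cc + β * D := hrep' b
    rw [hzb, hzb'] at e1 e2
    -- determinant argument
    set detN : ℝ := (A * A + B * Cc - 1) * (B * Cc + D * D - 1) - B * Cc * (A + D) ^ 2
      with hdetN
    have hda : detN * α = 0 := by
      rw [hdetN]
      linear_combination (B * Cc + D * D - 1) * e1 - B * (A + D) * e2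
    have hdb : detN * β = 0 := by
      rw [hdetN]
      linear_combination (-Cc * (A + D)) * e1 + (A * A + B * Cc - 1) * e2
    have hdet0 : detN = 0 := by
      rcases not_and_or.mp hαβ with h | h
      · exact (mul_eq_zero.mp hda).resolve_right h
      · exact (mul_eq_zero.mp hdb).resolve_right h
    rw [hdetN] at hdet0
    linear_combination -hdet0 + (A * D - B * Cc + 3) * hW
  · intro hΔ
    obtain ⟨μ, hμ1, hμ2⟩ : ∃ μ : ℝ, μ * μ = 1 ∧ A + D = 2 * μ := by
      have h : (A + D - 2) * (A + D + 2) = 0 := by linear_combination hΔ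
      rcases mul_eq_zero.mp h with h | h
      · exact ⟨1, by norm_num, by linarith⟩
      · exact ⟨-1, by norm_num, by linarith⟩
    have hdet : (A - μ) * (D - μ) - B * Cc = 0 := by
      linear_combination hW - hμ1 - μ * hμ2
    obtain ⟨α, β, hne, hv1, hv2⟩ : ∃ α β : ℝ, ¬(α = 0 ∧ β = 0) ∧
        A * α + B * β = μ * α ∧ Cc * α + D * β = μ * β := by
      by_cases h1 : B = 0 ∧ A = μ
      · by_cases h2 : Cc = 0 ∧ D = μ
        · exact ⟨1, 0, by simp, by rw [h1.2]; ring, by rw [h2.1, h2.2]; ring⟩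
        · refine ⟨D - μ, -Cc, ?_, ?_, by ring⟩
          · rintro ⟨ha, hbb⟩
            exact h2 ⟨by linarith [neg_eq_zero.mp hbb], by linarith⟩
          · rw [h1.1, h1.2]; ring
      · refine ⟨B, μ - A, ?_, by ring, by linear_combination -hdet⟩
        rintro ⟨ha, hbb⟩
        exact h1 ⟨ha, by linarith⟩
    refine ⟨fun y => α * z₁ y + β * z₂ y, comboD α β, comboD' α β, comboSol α β, ?_, ?_⟩
    · intro h
      have hα0 : α = 0 := by
        have := congrFun h 0
        simpa [init₁, init₂] using this
      have hβ0 : β = 0 := by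
        have h' := congrArg deriv h
        rw [comboDeriv] at h'
        have := congrFun h' 0
        have hz0 : deriv (0 : ℝ → ℝ) 0 = 0 := by
          rw [show (0 : ℝ → ℝ) = fun _ : ℝ => (0 : ℝ) from rfl, deriv_const]
        simpa [init₁', init₂', hz0] using this
      exact hne ⟨hα0, hβ0⟩
    · set z : ℝ → ℝ := fun y => α * z₁ y + β * z₂ y with hz_def
      obtain ⟨hsh, _⟩ := shift z (comboD α β) (comboD' α β) (comboSol α β)
      have hzb : z b = α * A + β * B := rfl
      have hzb' : deriv z b = α * Cc + β * D := by
        rw [hz_def, comboDeriv]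
      have hstep : ∀ y, z (y + b) = μ * z y := by
        intro y
        rw [hsh y, hzb, hzb']
        simp only [hz_def]
        linear_combination z₁ y * hv1 + z₂ y * hv2
      intro y
      rw [show y + 2 * b = (y + b) + b by ring, hstep (y + b), hstep y, ← mul_assoc, hμ1,
        one_mul]
end

section
/- The function θ is a strictly increasing bijection of ℝ onto ℝ (since θ' ≥ sqrt(n² − m²) > 0). Moreover, let p, λ ∈ ℝ and suppose φ : ℝ → ℝ satisfies the Hill equation φ''(y) + (λ f(y) − p²)φ(y) = 0, where f(y) = (m²+n²)/2 − m²cos²(θ(y)). Then the function ψ = φ ∘ θ⁻¹ satisfies the Ince-type equation (n² − m²cos²(s))·ψ''(s) + m² sin(s)cos(s)·ψ'(s) + (λ((m²+n²)/2 − m²cos²(s)) − p²)·ψ(s) = 0 for all s ∈ ℝ. -/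
open Real

/-- `θ` is a strictly increasing bijection of `ℝ`, and the change of variable `s = θ(y)`
turns the Hill equation `φ'' + (λf − p²)φ = 0` into an Ince-type equation for
`ψ = φ ∘ θ⁻¹`. -/
theorem stmt_17 (n m : ℝ) (hm : 0 < m) (hmn : m < n) (θ : ℝ → ℝ)
    (hθ0 : θ 0 = 0) (hθdiff : Differentiable ℝ θ)
    (hθ' : ∀ y, deriv θ y = Real.sqrt (n ^ 2 - m ^ 2 * Real.cos (θ y) ^ 2))
    (p lam : ℝ) (φ : ℝ → ℝ)
    (hφ : Differentiable ℝ φ) (hφ' : Differentiable ℝ (deriv φ))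
    (odeφ : ∀ y, deriv (deriv φ) y
      + (lam * ((m ^ 2 + n ^ 2) / 2 - m ^ 2 * Real.cos (θ y) ^ 2) - p ^ 2) * φ y = 0) :
    StrictMono θ ∧ Function.Bijective θ ∧
    ∀ s : ℝ,
      (n ^ 2 - m ^ 2 * Real.cos s ^ 2) * deriv (deriv (φ ∘ Function.invFun θ)) s
        + m ^ 2 * Real.sin s * Real.cos s * deriv (φ ∘ Function.invFun θ) s
        + (lam * ((m ^ 2 + n ^ 2) / 2 - m ^ 2 * Real.cos s ^ 2) - p ^ 2)
          * (φ ∘ Function.invFun θ) s = 0 := by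
  -- positivity of D s = n² - m² cos² s
  have hD : ∀ s : ℝ, 0 < n ^ 2 - m ^ 2 * Real.cos s ^ 2 := by
    intro s
    nlinarith [Real.cos_sq_le_one s, sq_nonneg (Real.cos s), sq_nonneg m]
  have hDsqrt_pos : ∀ s : ℝ, 0 < Real.sqrt (n ^ 2 - m ^ 2 * Real.cos s ^ 2) :=
    fun s => Real.sqrt_pos.mpr (hD s)
  have hθ'pos : ∀ y, 0 < deriv θ y := by
    intro y; rw [hθ' y]; exact hDsqrt_pos _
  have hmono : StrictMono θ := strictMono_of_deriv_pos hθ'pos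
  -- growth bound: θ y - c*y is monotone where c = sqrt (n² - m²)
  set c : ℝ := Real.sqrt (n ^ 2 - m ^ 2) with hc
  have hcpos : 0 < c := Real.sqrt_pos.mpr (by nlinarith)
  have hgrow : Monotone (fun y => θ y - c * y) := by
    apply monotone_of_deriv_nonneg
    · exact hθdiff.sub ((differentiable_const c).mul differentiable_id)
    · intro x
      have hlin : HasDerivAt (fun y : ℝ => c * y) c x := by
        simpa using (hasDerivAt_id x).const_mul c
      have h1 : HasDerivAt (fun y => θ y - c * y) (deriv θ x - c) x :=
        (hθdiff x).hasDerivAt.sub hlin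
      rw [h1.deriv]
      have : c ≤ deriv θ x := by
        rw [hθ' x, hc]
        apply Real.sqrt_le_sqrt
        nlinarith [Real.cos_sq_le_one (θ x), sq_nonneg m, sq_nonneg (Real.cos (θ x))]
      linarith
  have hsurj : Function.Surjective θ := by
    intro t
    have ha : θ (min 0 (t / c)) ≤ t := by
      have h1 : θ (min 0 (t / c)) - c * min 0 (t / c) ≤ θ 0 - c * 0 :=
        hgrow (min_le_left _ _)
      have h2 : c * min 0 (t / c) ≤ c * (t / c) :=
        mul_le_mul_of_nonneg_left (min_le_right _ _) hcpos.le
      rw [hθ0] at h1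
      rw [mul_div_cancel₀ _ hcpos.ne'] at h2
      linarith
    have hb : t ≤ θ (max 0 (t / c)) := by
      have h1 : θ 0 - c * 0 ≤ θ (max 0 (t / c)) - c * max 0 (t / c) :=
        hgrow (le_max_left _ _)
      have h2 : c * (t / c) ≤ c * max 0 (t / c) :=
        mul_le_mul_of_nonneg_left (le_max_right _ _) hcpos.le
      rw [hθ0] at h1
      rw [mul_div_cancel₀ _ hcpos.ne'] at h2
      linarith
    exact intermediate_value_univ (min 0 (t / c)) (max 0 (t / c)) hθdiff.continuous
      ⟨ha, hb⟩
  have hbij : Function.Bijective θ := ⟨hmono.injective, hsurj⟩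
  refine ⟨hmono, hbij, ?_⟩
  -- inverse function
  set g : ℝ → ℝ := Function.invFun θ with hg
  have hθg : ∀ s, θ (g s) = s := Function.rightInverse_invFun hsurj
  -- continuity of g
  have hgcont : Continuous g := by
    have he : g = ⇑(StrictMono.orderIsoOfSurjective θ hmono hsurj).symm := by
      funext s
      apply hmono.injective
      rw [hθg s]
      exact (StrictMono.orderIsoOfSurjective_self_symm_apply θ hmono hsurj s).symm
    rw [he]
    exact (StrictMono.orderIsoOfSurjective θ hmono hsurj).symm.continuous
  intro s
  have hcs_pos := hDsqrt_pos s
  set cs : ℝ := Real.sqrt (n ^ 2 - m ^ 2 * Real.cos s ^ 2) with hcs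
  -- derivative of θ at g s
  have hθat : HasDerivAt θ cs (g s) := by
    have h := (hθdiff (g s)).hasDerivAt
    rw [hθ' (g s), hθg s] at h
    exact h
  have hgdA : HasDerivAt g cs⁻¹ s :=
    HasDerivAt.of_local_left_inverse hgcont.continuousAt hθat hcs_pos.ne'
      (Filter.Eventually.of_forall hθg)
  -- first derivative of ψ = φ ∘ g, as a function
  have hψ' : deriv (φ ∘ g) = fun u => deriv φ (g u) *
      (Real.sqrt (n ^ 2 - m ^ 2 * Real.cos u ^ 2))⁻¹ := by
    funext u
    have hθatu : HasDerivAt θ (Real.sqrt (n ^ 2 - m ^ 2 * Real.cos u ^ 2)) (g u) := by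
      have h := (hθdiff (g u)).hasDerivAt
      rw [hθ' (g u), hθg u] at h
      exact h
    have hgu : HasDerivAt g (Real.sqrt (n ^ 2 - m ^ 2 * Real.cos u ^ 2))⁻¹ u :=
      HasDerivAt.of_local_left_inverse hgcont.continuousAt hθatu (hDsqrt_pos u).ne'
        (Filter.Eventually.of_forall hθg)
    exact ((hφ (g u)).hasDerivAt.comp u hgu).deriv
  -- second derivative
  have hDat : HasDerivAt (fun u : ℝ => n ^ 2 - m ^ 2 * Real.cos u ^ 2)
      (2 * m ^ 2 * Real.cos s * Real.sin s) s := by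
    have h1 : HasDerivAt (fun u : ℝ => Real.cos u ^ 2)
        ((2 : ℕ) * Real.cos s ^ 1 * (-Real.sin s)) s := (Real.hasDerivAt_cos s).pow 2
    have h2 := (h1.const_mul (m ^ 2)).const_sub (n ^ 2)
    refine h2.congr_deriv ?_
    push_cast; ring
  have hsqrtat : HasDerivAt (fun u : ℝ => Real.sqrt (n ^ 2 - m ^ 2 * Real.cos u ^ 2))
      (1 / (2 * cs) * (2 * m ^ 2 * Real.cos s * Real.sin s)) s :=
    (Real.hasDerivAt_sqrt (hD s).ne').comp s hDat
  have hinvat : HasDerivAt (fun u : ℝ => (Real.sqrt (n ^ 2 - m ^ 2 * Real.cos u ^ 2))⁻¹)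
      (-(1 / (2 * cs) * (2 * m ^ 2 * Real.cos s * Real.sin s)) / cs ^ 2) s :=
    hsqrtat.inv hcs_pos.ne'
  have hA : HasDerivAt (fun u : ℝ => deriv φ (g u)) (deriv (deriv φ) (g s) * cs⁻¹) s :=
    (hφ' (g s)).hasDerivAt.comp s hgdA
  have hψ'' : HasDerivAt (deriv (φ ∘ g))
      (deriv (deriv φ) (g s) * cs⁻¹ * cs⁻¹ +
        deriv φ (g s) * (-(1 / (2 * cs) * (2 * m ^ 2 * Real.cos s * Real.sin s)) / cs ^ 2)) s := by
    rw [hψ']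
    exact hA.mul hinvat
  have hderiv2 := hψ''.deriv
  have hderiv1 : deriv (φ ∘ g) s = deriv φ (g s) * cs⁻¹ := by rw [hψ']
  have hode := odeφ (g s)
  rw [hθg s] at hode
  have hcssq : cs ^ 2 = n ^ 2 - m ^ 2 * Real.cos s ^ 2 := Real.sq_sqrt (hD s).le
  have hψval : (φ ∘ g) s = φ (g s) := rfl
  rw [hderiv2, hderiv1, hψval, ← hcssq]
  have hcne : cs ≠ 0 := hcs_pos.ne'
  have expand : cs ^ 2 * (deriv (deriv φ) (g s) * cs⁻¹ * cs⁻¹ +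
        deriv φ (g s) * (-(1 / (2 * cs) * (2 * m ^ 2 * Real.cos s * Real.sin s)) / cs ^ 2))
      + m ^ 2 * Real.sin s * Real.cos s * (deriv φ (g s) * cs⁻¹)
      + (lam * ((m ^ 2 + n ^ 2) / 2 - m ^ 2 * Real.cos s ^ 2) - p ^ 2) * φ (g s)
      = deriv (deriv φ) (g s)
        + (lam * ((m ^ 2 + n ^ 2) / 2 - m ^ 2 * Real.cos s ^ 2) - p ^ 2) * φ (g s) := by
    field_simp
    ring
  rw [expand]
  exact hode
end

section
/- For all real numbers n > m > 0: ∫₀^{2π} (m² + n² − 2m²cos²(t)) / sqrt(n² − m²cos²(t)) dt = 4(n+m) ∫₀^{π/2} sqrt(1 − (4mn/(n+m)²) sin²(t)) dt. (Equivalently, in terms of complete elliptic integrals, 4n[((m²/n²) − 1)K(m/n) + 2E(m/n)] = 4(n+m)E(2·sqrt(mn)/(m+n)), a Landen-type transformation identity used to compute the area of the bipolar surface.) -/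
open Real Set intervalIntegral

namespace Stmt19

/-- `B n m θ = n² - m² sin²θ`. -/
noncomputable def B (n m θ : ℝ) : ℝ := n ^ 2 - m ^ 2 * Real.sin θ ^ 2

/-- Denominator `V n m θ = n + m sin²θ`. -/
noncomputable def V (n m θ : ℝ) : ℝ := n + m * Real.sin θ ^ 2

/-- the reduced LHS integrand. -/
noncomputable def fs (n m θ : ℝ) : ℝ :=
  (m ^ 2 + n ^ 2 - 2 * m ^ 2 * Real.sin θ ^ 2) / Real.sqrt (B n m θ)

/-- substitution map. -/
noncomputable def φ (n m θ : ℝ) : ℝ :=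
  Real.arcsin ((n + m) * Real.sin θ / V n m θ)

/-- derivative of the substitution map. -/
noncomputable def φd (n m θ : ℝ) : ℝ :=
  (n + m) * (n - m * Real.sin θ ^ 2) / (V n m θ * Real.sqrt (B n m θ))

/-- the exact-derivative correction term. -/
noncomputable def W (n m θ : ℝ) : ℝ :=
  Real.sin θ * Real.cos θ * Real.sqrt (B n m θ) / V n m θ

/-- derivative of `W`. -/
noncomputable def Wd (n m θ : ℝ) : ℝ :=
  ((Real.cos θ ^ 2 - Real.sin θ ^ 2) * B n m θ * V n m θ
      - m ^ 2 * Real.sin θ ^ 2 * Real.cos θ ^ 2 * V n m θ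
      - 2 * m * Real.sin θ ^ 2 * Real.cos θ ^ 2 * B n m θ)
    / (Real.sqrt (B n m θ) * V n m θ ^ 2)

variable {n m : ℝ}

lemma Bpos (hm : 0 < m) (hmn : m < n) (θ : ℝ) : 0 < B n m θ := by
  have h1 : m ^ 2 * Real.sin θ ^ 2 ≤ m ^ 2 * 1 := by
    have := Real.sin_sq_le_one θ
    nlinarith
  have : m ^ 2 < n ^ 2 := by nlinarith
  simp only [B]; nlinarith

lemma Vpos (hm : 0 < m) (hmn : m < n) (θ : ℝ) : 0 < V n m θ := by
  have := sq_nonneg (Real.sin θ)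
  simp only [V]; nlinarith

lemma sqrtBpos (hm : 0 < m) (hmn : m < n) (θ : ℝ) : 0 < Real.sqrt (B n m θ) :=
  Real.sqrt_pos.2 (Bpos hm hmn θ)

lemma nms2pos (hm : 0 < m) (hmn : m < n) (θ : ℝ) : 0 < n - m * Real.sin θ ^ 2 := by
  have h1 : m * Real.sin θ ^ 2 ≤ m * 1 := by
    have := Real.sin_sq_le_one θ
    nlinarith
  nlinarith

lemma key_poly (m n s c q : ℝ) (hc : s ^ 2 + c ^ 2 = 1) (hq : q ^ 2 = n ^ 2 - m ^ 2 * s ^ 2) :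
    (n + m) ^ 2 * (n - m * s ^ 2) ^ 2
      = (n ^ 2 + m ^ 2 - 2 * m ^ 2 * s ^ 2) * (n + m * s ^ 2) ^ 2
        + 2 * m * ((c ^ 2 - s ^ 2) * q ^ 2 * (n + m * s ^ 2)
            - m ^ 2 * s ^ 2 * c ^ 2 * (n + m * s ^ 2)
            - 2 * m * s ^ 2 * c ^ 2 * q ^ 2) := by
  have hc2 : c ^ 2 = 1 - s ^ 2 := by linarith
  rw [hq, hc2]; ring

lemma continuous_B : Continuous (B n m) := by
  unfold B; fun_prop

lemma continuous_V : Continuous (V n m) := by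
  unfold V; fun_prop

lemma continuous_sqrtB : Continuous (fun θ => Real.sqrt (B n m θ)) :=
  Real.continuous_sqrt.comp continuous_B

lemma continuous_fs (hm : 0 < m) (hmn : m < n) : Continuous (fs n m) := by
  apply Continuous.div
  · fun_prop
  · exact continuous_sqrtB
  · intro θ; exact ne_of_gt (sqrtBpos hm hmn θ)

lemma continuous_Wd (hm : 0 < m) (hmn : m < n) : Continuous (Wd n m) := by
  apply Continuous.div
  · have := @continuous_B n m; have := @continuous_V n m; fun_prop
  · have := @continuous_sqrtB n m; have := @continuous_V n m; fun_prop
  · intro θ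
    exact ne_of_gt (mul_pos (sqrtBpos hm hmn θ) (pow_pos (Vpos hm hmn θ) 2))

lemma continuous_φd (hm : 0 < m) (hmn : m < n) : Continuous (φd n m) := by
  apply Continuous.div
  · fun_prop
  · have := @continuous_sqrtB n m; have := @continuous_V n m; fun_prop
  · intro θ
    exact ne_of_gt (mul_pos (Vpos hm hmn θ) (sqrtBpos hm hmn θ))

lemma continuous_φ (hm : 0 < m) (hmn : m < n) : Continuous (φ n m) := by
  unfold φ
  exact Real.continuous_arcsin.comp
    (Continuous.div (by fun_prop) continuous_V (fun θ => ne_of_gt (Vpos hm hmn θ)))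

lemma hasDerivAt_B (θ : ℝ) :
    HasDerivAt (B n m) (-(m ^ 2 * (2 * Real.sin θ * Real.cos θ))) θ := by
  have h := (((Real.hasDerivAt_sin θ).pow 2).const_mul (m ^ 2)).const_sub (n ^ 2)
  show HasDerivAt (fun θ => n ^ 2 - m ^ 2 * Real.sin θ ^ 2) _ θ
  simpa [pow_one] using h

lemma hasDerivAt_V (θ : ℝ) :
    HasDerivAt (V n m) (m * (2 * Real.sin θ * Real.cos θ)) θ := by
  have h := (((Real.hasDerivAt_sin θ).pow 2).const_mul m).const_add n
  show HasDerivAt (fun θ => n + m * Real.sin θ ^ 2) _ θ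
  simpa [pow_one] using h

lemma hasDerivAt_sqrtB (hm : 0 < m) (hmn : m < n) (θ : ℝ) :
    HasDerivAt (fun y => Real.sqrt (B n m y))
      (-(m ^ 2 * (2 * Real.sin θ * Real.cos θ)) / (2 * Real.sqrt (B n m θ))) θ := by
  have h := (Real.hasDerivAt_sqrt (ne_of_gt (Bpos hm hmn θ))).comp θ (hasDerivAt_B θ)
  refine h.congr_deriv ?_
  ring

lemma hasDerivAt_W (hm : 0 < m) (hmn : m < n) (θ : ℝ) :
    HasDerivAt (W n m) (Wd n m θ) θ := by
  have hBpos := Bpos hm hmn θ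
  have hVpos := Vpos hm hmn θ
  have hq : Real.sqrt (B n m θ) ^ 2 = B n m θ := Real.sq_sqrt hBpos.le
  have hqpos := sqrtBpos hm hmn θ
  have hsc : HasDerivAt (fun y => Real.sin y * Real.cos y)
      (Real.cos θ * Real.cos θ + Real.sin θ * -Real.sin θ) θ :=
    (Real.hasDerivAt_sin θ).mul (Real.hasDerivAt_cos θ)
  have hnum := hsc.mul (hasDerivAt_sqrtB hm hmn θ)
  have h := hnum.div (hasDerivAt_V θ) (ne_of_gt hVpos)
  refine h.congr_deriv ?_
  unfold Wd
  simp only [Pi.mul_apply]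
  set q := Real.sqrt (B n m θ) with hqdef
  rw [← hq]
  field_simp [hqpos.ne', hVpos.ne']
  ring

lemma hasDerivAt_φ (hm : 0 < m) (hmn : m < n) {θ : ℝ} (hθ : θ ∈ Ioo (0:ℝ) (π/2)) :
    HasDerivAt (φ n m) (φd n m θ) θ := by
  have hBpos := Bpos hm hmn θ
  have hVpos := Vpos hm hmn θ
  have hq : Real.sqrt (B n m θ) ^ 2 = B n m θ := Real.sq_sqrt hBpos.le
  have hqpos := sqrtBpos hm hmn θ
  have hspos : 0 < Real.sin θ := Real.sin_pos_of_pos_of_lt_pi hθ.1 (lt_trans hθ.2 (by linarith [Real.pi_pos]))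
  have hs1 : Real.sin θ < 1 := by
    have := Real.sin_lt_sin_of_lt_of_le_pi_div_two (x := θ) (y := π/2) (by linarith [hθ.1, Real.pi_pos]) le_rfl hθ.2
    simpa using this
  have hcpos : 0 < Real.cos θ :=
    Real.cos_pos_of_mem_Ioo ⟨by linarith [hθ.1, Real.pi_pos], hθ.2⟩
  -- the inner function h and its derivative
  have hh : HasDerivAt (fun y => (n + m) * Real.sin y / V n m y)
      (((n + m) * Real.cos θ * V n m θ
          - (n + m) * Real.sin θ * (m * (2 * Real.sin θ * Real.cos θ))) / V n m θ ^ 2) θ :=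
    (((Real.hasDerivAt_sin θ).const_mul (n + m)).div (hasDerivAt_V θ) (ne_of_gt hVpos))
  have hlt : (n + m) * Real.sin θ / V n m θ < 1 := by
    rw [div_lt_one hVpos]
    unfold V
    nlinarith [nms2pos hm hmn θ, mul_pos (sub_pos.2 hs1) (sub_pos.2 (show m * Real.sin θ < n by nlinarith))]
  have hgt : (-1 : ℝ) < (n + m) * Real.sin θ / V n m θ := by
    have : 0 < (n + m) * Real.sin θ / V n m θ :=
      div_pos (mul_pos (by linarith) hspos) hVpos
    linarith
  have harc := (Real.hasDerivAt_arcsin (ne_of_gt hgt) (ne_of_lt hlt)).comp θ hh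
  have hpy := Real.sin_sq_add_cos_sq θ
  have e2 : V n m θ ^ 2 - ((n + m) * Real.sin θ) ^ 2 = Real.cos θ ^ 2 * B n m θ := by
    unfold B V
    linear_combination (-(n ^ 2 - m ^ 2 * Real.sin θ ^ 2)) * hpy
  have hval : Real.sqrt (1 - ((n + m) * Real.sin θ / V n m θ) ^ 2)
      = Real.cos θ * Real.sqrt (B n m θ) / V n m θ := by
    rw [show 1 - ((n + m) * Real.sin θ / V n m θ) ^ 2
        = (Real.cos θ * Real.sqrt (B n m θ) / V n m θ) ^ 2 by
      conv_rhs => rw [div_pow, mul_pow, Real.sq_sqrt (Bpos hm hmn θ).le, ← e2]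
      field_simp]
    exact Real.sqrt_sq (by positivity)
  unfold φ
  refine harc.congr_deriv ?_
  rw [hval]
  unfold φd
  set q := Real.sqrt (B n m θ) with hqdef
  field_simp [hqpos.ne', hcpos.ne', hVpos.ne']
  unfold V
  ring

lemma div_id (m n s c q : ℝ) (hpy : s ^ 2 + c ^ 2 = 1) (hq : q ^ 2 = n ^ 2 - m ^ 2 * s ^ 2)
    (hq0 : q ≠ 0) (hV : n + m * s ^ 2 ≠ 0) :
    (n + m) *
        ((n - m * s ^ 2) / (n + m * s ^ 2) *
          ((n + m) * (n - m * s ^ 2) / ((n + m * s ^ 2) * q)))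
      = (m ^ 2 + n ^ 2 - 2 * m ^ 2 * s ^ 2) / q +
          2 * m *
            (((c ^ 2 - s ^ 2) * q ^ 2 * (n + m * s ^ 2) -
                  m ^ 2 * s ^ 2 * c ^ 2 * (n + m * s ^ 2) -
                2 * m * s ^ 2 * c ^ 2 * q ^ 2) /
              (q * (n + m * s ^ 2) ^ 2)) := by
  have key := key_poly m n s c q hpy hq
  have h1 : (n + m) *
        ((n - m * s ^ 2) / (n + m * s ^ 2) *
          ((n + m) * (n - m * s ^ 2) / ((n + m * s ^ 2) * q)))
      = ((n + m) ^ 2 * (n - m * s ^ 2) ^ 2) / ((n + m * s ^ 2) ^ 2 * q) := by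
    field_simp
  have h2 : (m ^ 2 + n ^ 2 - 2 * m ^ 2 * s ^ 2) / q +
          2 * m *
            (((c ^ 2 - s ^ 2) * q ^ 2 * (n + m * s ^ 2) -
                  m ^ 2 * s ^ 2 * c ^ 2 * (n + m * s ^ 2) -
                2 * m * s ^ 2 * c ^ 2 * q ^ 2) /
              (q * (n + m * s ^ 2) ^ 2))
      = ((m ^ 2 + n ^ 2 - 2 * m ^ 2 * s ^ 2) * (n + m * s ^ 2) ^ 2 +
          2 * m * ((c ^ 2 - s ^ 2) * q ^ 2 * (n + m * s ^ 2) -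
                  m ^ 2 * s ^ 2 * c ^ 2 * (n + m * s ^ 2) -
                2 * m * s ^ 2 * c ^ 2 * q ^ 2)) / ((n + m * s ^ 2) ^ 2 * q) := by
    field_simp
  rw [h1, h2]
  congr 1
  linear_combination key

lemma integrand_eq (hm : 0 < m) (hmn : m < n) {θ : ℝ} (hθ : θ ∈ Icc (0:ℝ) (π/2)) :
    (n + m) * (Real.sqrt (1 - (4 * m * n / (n + m) ^ 2) * Real.sin (φ n m θ) ^ 2) * φd n m θ)
      = fs n m θ + 2 * m * Wd n m θ := by
  have hBpos := Bpos hm hmn θ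
  have hVpos := Vpos hm hmn θ
  have hq : Real.sqrt (B n m θ) ^ 2 = B n m θ := Real.sq_sqrt hBpos.le
  have hqpos := sqrtBpos hm hmn θ
  have hpy := Real.sin_sq_add_cos_sq θ
  have hs0 : 0 ≤ Real.sin θ :=
    Real.sin_nonneg_of_nonneg_of_le_pi hθ.1 (by linarith [hθ.2, Real.pi_pos])
  have hs1 : Real.sin θ ≤ 1 := Real.sin_le_one θ
  have hnm : (0:ℝ) < n + m := by linarith
  have hmsn : m * Real.sin θ ≤ n := by nlinarith
  have hle1 : (n + m) * Real.sin θ / V n m θ ≤ 1 := by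
    rw [div_le_one hVpos]; unfold V
    nlinarith [mul_nonneg (sub_nonneg.2 hs1) (sub_nonneg.2 hmsn)]
  have hgem1 : (-1:ℝ) ≤ (n + m) * Real.sin θ / V n m θ := by
    have : 0 ≤ (n + m) * Real.sin θ / V n m θ :=
      div_nonneg (mul_nonneg hnm.le hs0) hVpos.le
    linarith
  rw [show φ n m θ = Real.arcsin ((n + m) * Real.sin θ / V n m θ) from rfl,
    Real.sin_arcsin hgem1 hle1]
  have e1 : 1 - (4 * m * n / (n + m) ^ 2) * ((n + m) * Real.sin θ / V n m θ) ^ 2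
      = ((n - m * Real.sin θ ^ 2) / V n m θ) ^ 2 := by
    unfold V
    have hVu : (0:ℝ) < n + m * Real.sin θ ^ 2 := by nlinarith [sq_nonneg (Real.sin θ)]
    field_simp
    ring
  rw [e1, Real.sqrt_sq (div_nonneg (nms2pos hm hmn θ).le hVpos.le)]
  unfold φd fs Wd
  set q := Real.sqrt (B n m θ) with hqdef
  rw [← hq]
  have key := key_poly m n (Real.sin θ) (Real.cos θ) q hpy hq
  unfold V at hVpos ⊢
  exact div_id m n (Real.sin θ) (Real.cos θ) q hpy hq hqpos.ne' hVpos.ne'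

lemma φ_zero (hm : 0 < m) (hmn : m < n) : φ n m 0 = 0 := by
  simp [φ, V]

lemma φ_pi_div_two (hm : 0 < m) (hmn : m < n) : φ n m (π / 2) = π / 2 := by
  have hnm : n + m ≠ 0 := by linarith
  simp [φ, V, hnm, Real.arcsin_one]

lemma W_zero : W n m 0 = 0 := by simp [W]

lemma W_pi_div_two : W n m (π / 2) = 0 := by simp [W]

end Stmt19

open Stmt19

/-- A Landen-type transformation identity:
`∫₀^{2π} (m² + n² − 2m²cos²t)/sqrt(n² − m²cos²t) dt
  = 4(n+m) ∫₀^{π/2} sqrt(1 − (4mn/(n+m)²) sin²t) dt`. -/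
theorem stmt_19 (n m : ℝ) (hm : 0 < m) (hmn : m < n) :
    (∫ t in (0:ℝ)..(2 * π),
        (m ^ 2 + n ^ 2 - 2 * m ^ 2 * Real.cos t ^ 2)
          / Real.sqrt (n ^ 2 - m ^ 2 * Real.cos t ^ 2)) =
      4 * (n + m) * ∫ t in (0:ℝ)..(π / 2),
        Real.sqrt (1 - (4 * m * n / (n + m) ^ 2) * Real.sin t ^ 2) := by
  have hn : 0 < n := lt_trans hm hmn
  have hπ := Real.pi_pos
  set f : ℝ → ℝ := fun t =>
    (m ^ 2 + n ^ 2 - 2 * m ^ 2 * Real.cos t ^ 2)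
      / Real.sqrt (n ^ 2 - m ^ 2 * Real.cos t ^ 2) with hfdef
  have hDcos : ∀ t : ℝ, 0 < n ^ 2 - m ^ 2 * Real.cos t ^ 2 := by
    intro t
    nlinarith [Real.cos_sq_le_one t, sq_nonneg m, sq_nonneg (Real.cos t),
      mul_pos (sub_pos.2 hmn) (show (0:ℝ) < n + m by linarith)]
  have hfC : Continuous f := by
    apply Continuous.div (by fun_prop) (Real.continuous_sqrt.comp (by fun_prop))
    intro t
    exact ne_of_gt (Real.sqrt_pos.2 (hDcos t))
  have hper : ∀ t : ℝ, f (t + π) = f t := by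
    intro t
    simp only [hfdef, Real.cos_add_pi, neg_sq]
  have hsym : ∀ t : ℝ, f (π - t) = f t := by
    intro t
    simp only [hfdef, Real.cos_pi_sub, neg_sq]
  have hflip : ∀ t : ℝ, f (π / 2 - t) = fs n m t := by
    intro t
    simp only [hfdef, Real.cos_pi_div_two_sub, fs, B]
  -- reduce [0, 2π] to 2 × [0, π]
  have red1 : ∫ t in π..(2 * π), f t = ∫ t in (0:ℝ)..π, f t := by
    calc ∫ t in π..(2 * π), f t = ∫ t in (0:ℝ) + π..π + π, f t := by
          congr 1 <;> ring
      _ = ∫ t in (0:ℝ)..π, f (t + π) :=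
          (intervalIntegral.integral_comp_add_right f π).symm
      _ = ∫ t in (0:ℝ)..π, f t := by simp only [hper]
  have red2 : ∫ t in (π/2)..π, f t = ∫ t in (0:ℝ)..(π/2), f t := by
    calc ∫ t in (π/2)..π, f t = ∫ t in π - (π/2)..π - 0, f t := by
          congr 1 <;> ring
      _ = ∫ t in (0:ℝ)..(π/2), f (π - t) :=
          (intervalIntegral.integral_comp_sub_left f π).symm
      _ = ∫ t in (0:ℝ)..(π/2), f t := by simp only [hsym]
  have red3 : ∫ t in (0:ℝ)..(π/2), f t = ∫ t in (0:ℝ)..(π/2), fs n m t := by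
    calc ∫ t in (0:ℝ)..(π/2), f t = ∫ t in π/2 - (π/2)..π/2 - 0, f t := by
          congr 1 <;> ring
      _ = ∫ t in (0:ℝ)..(π/2), f (π/2 - t) :=
          (intervalIntegral.integral_comp_sub_left f (π/2)).symm
      _ = ∫ t in (0:ℝ)..(π/2), fs n m t := by simp only [hflip]
  have split1 : ∫ t in (0:ℝ)..(2 * π), f t
      = (∫ t in (0:ℝ)..π, f t) + ∫ t in π..(2 * π), f t :=
    (intervalIntegral.integral_add_adjacent_intervals
      (hfC.intervalIntegrable _ _) (hfC.intervalIntegrable _ _)).symm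
  have split2 : ∫ t in (0:ℝ)..π, f t
      = (∫ t in (0:ℝ)..(π/2), f t) + ∫ t in (π/2)..π, f t :=
    (intervalIntegral.integral_add_adjacent_intervals
      (hfC.intervalIntegrable _ _) (hfC.intervalIntegrable _ _)).symm
  have lhs_eq : ∫ t in (0:ℝ)..(2 * π), f t = 4 * ∫ t in (0:ℝ)..(π/2), fs n m t := by
    rw [split1, red1, split2, red2, red3]; ring
  -- substitution on the right-hand side
  set g : ℝ → ℝ := fun u =>
    Real.sqrt (1 - (4 * m * n / (n + m) ^ 2) * Real.sin u ^ 2) with hgdef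
  have hgC : Continuous g := Real.continuous_sqrt.comp (by fun_prop)
  have hsub : ∫ u in (0:ℝ)..(π/2), g u
      = ∫ θ in (0:ℝ)..(π/2), (g ∘ φ n m) θ * φd n m θ := by
    rw [intervalIntegral.integral_comp_mul_deriv''
      ((continuous_φ hm hmn).continuousOn)
      (fun x hx => by
        rw [min_eq_left (by linarith), max_eq_right (by linarith)] at hx
        exact (hasDerivAt_φ hm hmn hx).hasDerivWithinAt)
      ((continuous_φd hm hmn).continuousOn)
      (hgC.continuousOn)]
    rw [φ_zero hm hmn, φ_pi_div_two hm hmn]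
  -- pointwise identity
  have hptw : (n + m) * ∫ θ in (0:ℝ)..(π/2), (g ∘ φ n m) θ * φd n m θ
      = ∫ θ in (0:ℝ)..(π/2), (fs n m θ + 2 * m * Wd n m θ) := by
    rw [← intervalIntegral.integral_const_mul]
    apply intervalIntegral.integral_congr
    intro θ hθ
    rw [Set.uIcc_of_le (by linarith : (0:ℝ) ≤ π/2)] at hθ
    exact integrand_eq hm hmn hθ
  have hWint : ∫ θ in (0:ℝ)..(π/2), Wd n m θ = 0 := by
    rw [intervalIntegral.integral_eq_sub_of_hasDerivAt
      (fun x _ => hasDerivAt_W hm hmn x)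
      (((continuous_Wd hm hmn)).intervalIntegrable _ _)]
    rw [W_pi_div_two, W_zero, sub_zero]
  have hadd : ∫ θ in (0:ℝ)..(π/2), (fs n m θ + 2 * m * Wd n m θ)
      = (∫ θ in (0:ℝ)..(π/2), fs n m θ) + 2 * m * ∫ θ in (0:ℝ)..(π/2), Wd n m θ := by
    rw [intervalIntegral.integral_add ((continuous_fs hm hmn).intervalIntegrable _ _)
      (((continuous_Wd hm hmn).intervalIntegrable _ _).const_mul (2 * m)),
      intervalIntegral.integral_const_mul]
  calc ∫ t in (0:ℝ)..(2 * π), f t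
      = 4 * ∫ t in (0:ℝ)..(π/2), fs n m t := lhs_eq
    _ = 4 * ((∫ θ in (0:ℝ)..(π/2), fs n m θ) + 2 * m * ∫ θ in (0:ℝ)..(π/2), Wd n m θ) := by
          rw [hWint]; ring
    _ = 4 * ((n + m) * ∫ θ in (0:ℝ)..(π/2), (g ∘ φ n m) θ * φd n m θ) := by
          rw [hptw, hadd]
    _ = 4 * (n + m) * ∫ u in (0:ℝ)..(π/2), g u := by rw [← hsub]; ring
end
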